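/- arXiv:2103.09594 — 3 statements merged into one kernel-verified Lean document; each statement's English description precedes it below -/
import Mathlib

section
/- Let 0 ≤ a ≤ 1 and let μ be a Borel probability measure on 𝕋 = ℝ/ℤ such that |μ̂(n)| ≤ K |n|^{-a} for all integers n ≠ 0 and some constant K > 0. Let f ∈ L²(𝕋) with Fourier coefficients f̂(n), and suppose f belongs to the Sobolev space H^p(𝕋) for some p > (1−a)/2, i.e. Σ_{n∈ℤ} |f̂(n)|² (1 + n²)^p < ∞. Then the Fourier series Σ_{n∈ℤ} f̂(n) exp(2πint) of f converges μ-almost everywhere on 𝕋, in the sense that the symmetric partial sums Σ_{|n|≤N} f̂(n) exp(2πint) converge in ℂ as N → ∞ for μ-almost every t ∈ 𝕋. -/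
open MeasureTheory Filter
open ComplexConjugate

lemma aux_sum_rpow {α s : ℝ} (hα0 : 0 ≤ α) (hs0 : 0 < s) (hs1 : s ≤ 1) (hαs : 1 - α ≤ s) :
    ∀ L : ℕ, ∑ k ∈ Finset.range L, ((k : ℝ) + 1) ^ (-α) ≤ (L : ℝ) ^ s / s := by
  intro L
  induction L with
  | zero => simp [Real.zero_rpow hs0.ne']
  | succ L ih =>
    rw [Finset.sum_range_succ]
    have hL1 : (0:ℝ) < (L:ℝ) + 1 := by positivity
    have key : s * ((L : ℝ) + 1) ^ (-α) ≤ ((L : ℝ) + 1) ^ s - (L : ℝ) ^ s := by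
      have hb : (-1 : ℝ) ≤ -(1 / ((L:ℝ)+1)) := by
        rw [neg_le_neg_iff]
        exact div_le_one_of_le₀ (by linarith) hL1.le
      have hber := rpow_one_add_le_one_add_mul_self hb hs0.le hs1
      have e0 : ((L:ℝ)+1) * (1 + -(1/((L:ℝ)+1))) = (L:ℝ) := by field_simp; ring
      have h1 : (L : ℝ) ^ s ≤ ((L:ℝ)+1) ^ s * (1 + s * -(1 / ((L:ℝ)+1))) := by
        calc (L:ℝ)^s = (((L:ℝ)+1) * (1 + -(1/((L:ℝ)+1))))^s := by rw [e0]
          _ = ((L:ℝ)+1)^s * (1 + -(1/((L:ℝ)+1)))^s :=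
              Real.mul_rpow hL1.le (by nlinarith [hb])
          _ ≤ ((L:ℝ)+1)^s * (1 + s * -(1/((L:ℝ)+1))) :=
              mul_le_mul_of_nonneg_left hber (Real.rpow_nonneg hL1.le s)
      have h2 : s * ((L:ℝ)+1) ^ (-α) ≤ ((L:ℝ)+1)^s * (s * (1 / ((L:ℝ)+1))) := by
        have e1 : ((L:ℝ)+1)^s * (1 / ((L:ℝ)+1)) = ((L:ℝ)+1) ^ (s - 1) := by
          rw [Real.rpow_sub hL1, Real.rpow_one]
          ring
        have e2 : ((L:ℝ)+1) ^ (-α) ≤ ((L:ℝ)+1) ^ (s - 1) :=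
          Real.rpow_le_rpow_of_exponent_le (by linarith) (by linarith)
        calc s * ((L:ℝ)+1) ^ (-α) ≤ s * ((L:ℝ)+1) ^ (s-1) := by
              exact mul_le_mul_of_nonneg_left e2 hs0.le
          _ = ((L:ℝ)+1)^s * (s * (1 / ((L:ℝ)+1))) := by rw [← e1]; ring
      nlinarith [h1, h2]
    have : ((L:ℝ)+1) ^ (-α) ≤ (((L:ℝ)+1) ^ s - (L:ℝ)^s) / s := by
      rw [le_div_iff₀ hs0]; nlinarith [key]
    push_cast
    have e3 : (L:ℝ)^s/s + (((L:ℝ)+1)^s - (L:ℝ)^s)/s = ((L:ℝ)+1)^s/s := by ring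
    linarith [ih, this]

lemma aux_amgm {x t : ℝ} (hx : 0 ≤ x) (ht : 0 < t) : Real.sqrt x ≤ (t * x + 1/t) / 2 := by
  have h : Real.sqrt x ^ 2 = x := Real.sq_sqrt hx
  have h2 := mul_nonneg ht.le (sq_nonneg (Real.sqrt x - 1/t))
  have key : t * x + 1/t - 2 * Real.sqrt x = t * (Real.sqrt x - 1/t)^2 := by
    field_simp
    linear_combination (-(t^2)) * h
  linarith [h2, key]

lemma aux_chain (h : ℕ → ℂ) :
    ∀ (r : ℕ) (c d : ℕ), d < 2 ^ r →
      ‖h (c + d) - h c‖ ≤ ∑ ℓ ∈ Finset.range r,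
        Real.sqrt (∑ k ∈ Finset.range (2 ^ (r - ℓ)),
          ‖h (c + (k+1) * 2 ^ ℓ) - h (c + k * 2 ^ ℓ)‖ ^ 2) := by
  intro r
  induction r with
  | zero =>
    intro c d hd
    interval_cases d
    simp
  | succ r ih =>
    intro c d hd
    have hsum_nonneg : ∀ (c' : ℕ) (ℓ : ℕ) (m : ℕ), (0:ℝ) ≤ ∑ k ∈ Finset.range m,
        ‖h (c' + (k+1) * 2 ^ ℓ) - h (c' + k * 2 ^ ℓ)‖ ^ 2 := by
      intro c' ℓ m
      exact Finset.sum_nonneg fun k _ => sq_nonneg _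
    by_cases hcase : d < 2 ^ r
    · refine (ih c d hcase).trans ?_
      rw [Finset.sum_range_succ]
      have hmono : ∀ ℓ ∈ Finset.range r,
          Real.sqrt (∑ k ∈ Finset.range (2 ^ (r - ℓ)),
            ‖h (c + (k+1) * 2 ^ ℓ) - h (c + k * 2 ^ ℓ)‖ ^ 2)
          ≤ Real.sqrt (∑ k ∈ Finset.range (2 ^ (r + 1 - ℓ)),
            ‖h (c + (k+1) * 2 ^ ℓ) - h (c + k * 2 ^ ℓ)‖ ^ 2) := by
        intro ℓ hℓ
        apply Real.sqrt_le_sqrt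
        apply Finset.sum_le_sum_of_subset_of_nonneg
        · exact Finset.range_subset_range.2 (Nat.pow_le_pow_right (by norm_num) (by omega))
        · intro k _ _; exact sq_nonneg _
      calc _ ≤ ∑ ℓ ∈ Finset.range r, Real.sqrt (∑ k ∈ Finset.range (2 ^ (r + 1 - ℓ)),
            ‖h (c + (k+1) * 2 ^ ℓ) - h (c + k * 2 ^ ℓ)‖ ^ 2) := Finset.sum_le_sum hmono
        _ ≤ _ := le_add_of_nonneg_right (Real.sqrt_nonneg _)
    · -- 2^r ≤ d
      push_neg at hcase
      have hd' : d - 2 ^ r < 2 ^ r := by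
        have : (2:ℕ) ^ (r+1) = 2^r + 2^r := by ring
        omega
      have hsplit : ‖h (c + d) - h c‖ ≤ ‖h (c + d) - h (c + 2 ^ r)‖ + ‖h (c + 2 ^ r) - h c‖ := by
        calc ‖h (c + d) - h c‖ = ‖(h (c + d) - h (c + 2 ^ r)) + (h (c + 2 ^ r) - h c)‖ := by
              rw [sub_add_sub_cancel]
          _ ≤ _ := norm_add_le _ _
      refine hsplit.trans ?_
      rw [Finset.sum_range_succ]
      have hterm2 : ‖h (c + 2 ^ r) - h c‖ ≤ Real.sqrt (∑ k ∈ Finset.range (2 ^ (r + 1 - r)),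
          ‖h (c + (k+1) * 2 ^ r) - h (c + k * 2 ^ r)‖ ^ 2) := by
        rw [Real.le_sqrt (norm_nonneg _)]
        have h0 : ‖h (c + 2 ^ r) - h c‖ ^ 2
            = ‖h (c + (0+1) * 2 ^ r) - h (c + 0 * 2 ^ r)‖ ^ 2 := by norm_num
        rw [h0]
        exact Finset.single_le_sum (f := fun k => ‖h (c + (k+1) * 2 ^ r) - h (c + k * 2 ^ r)‖ ^ 2)
          (fun k _ => sq_nonneg _) (Finset.mem_range.2 (by positivity))
        exact hsum_nonneg c r _
      have hterm1 : ‖h (c + d) - h (c + 2 ^ r)‖ ≤ ∑ ℓ ∈ Finset.range r,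
          Real.sqrt (∑ k ∈ Finset.range (2 ^ (r + 1 - ℓ)),
            ‖h (c + (k+1) * 2 ^ ℓ) - h (c + k * 2 ^ ℓ)‖ ^ 2) := by
        have heq : c + d = (c + 2 ^ r) + (d - 2 ^ r) := by omega
        rw [heq]
        refine (ih (c + 2 ^ r) (d - 2 ^ r) hd').trans ?_
        apply Finset.sum_le_sum
        intro ℓ hℓ
        have hℓr : ℓ ≤ r := (Finset.mem_range.1 hℓ).le
        have hE : 2 ^ (r - ℓ) * 2 ^ ℓ = 2 ^ r := by
          rw [← pow_add]; congr 1; omega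
        apply Real.sqrt_le_sqrt
        have hre : ∀ k : ℕ, (c + 2 ^ r) + (k+1) * 2 ^ ℓ = c + ((k + 2 ^ (r - ℓ)) + 1) * 2 ^ ℓ ∧
            (c + 2 ^ r) + k * 2 ^ ℓ = c + (k + 2 ^ (r - ℓ)) * 2 ^ ℓ := by
          intro k
          constructor <;> · rw [← hE]; ring
        calc ∑ k ∈ Finset.range (2 ^ (r - ℓ)),
              ‖h ((c + 2 ^ r) + (k+1) * 2 ^ ℓ) - h ((c + 2 ^ r) + k * 2 ^ ℓ)‖ ^ 2
            = ∑ k ∈ Finset.range (2 ^ (r - ℓ)),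
              ‖h (c + ((k + 2 ^ (r - ℓ)) + 1) * 2 ^ ℓ) - h (c + (k + 2 ^ (r - ℓ)) * 2 ^ ℓ)‖ ^ 2 := by
              apply Finset.sum_congr rfl
              intro k _
              rw [(hre k).1, (hre k).2]
          _ = ∑ k ∈ Finset.Ico (2 ^ (r - ℓ)) (2 ^ (r - ℓ) + 2 ^ (r - ℓ)),
              ‖h (c + (k + 1) * 2 ^ ℓ) - h (c + k * 2 ^ ℓ)‖ ^ 2 := by
              rw [Finset.sum_Ico_eq_sum_range]
              simp only [Nat.add_sub_cancel_left, Nat.add_sub_cancel]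
              apply Finset.sum_congr rfl
              intro k _
              rw [show 2 ^ (r - ℓ) + k = k + 2 ^ (r - ℓ) from Nat.add_comm _ _]
          _ ≤ ∑ k ∈ Finset.range (2 ^ (r + 1 - ℓ)),
              ‖h (c + (k+1) * 2 ^ ℓ) - h (c + k * 2 ^ ℓ)‖ ^ 2 := by
              apply Finset.sum_le_sum_of_subset_of_nonneg
              · intro k hk
                rw [Finset.mem_Ico] at hk
                rw [Finset.mem_range]
                have : 2 ^ (r + 1 - ℓ) = 2 ^ (r - ℓ) + 2 ^ (r - ℓ) := by
                  have : r + 1 - ℓ = (r - ℓ) + 1 := by omega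
                  rw [this]; ring
                omega
              · intro k _ _; exact sq_nonneg _
      linarith [hterm1, hterm2]

noncomputable def wfun (K α : ℝ) (k : ℤ) : ℝ := if k = 0 then 1 else K * |(k : ℝ)| ^ (-α)

lemma wfun_nonneg {K α : ℝ} (hK : 0 < K) (k : ℤ) : 0 ≤ wfun K α k := by
  unfold wfun
  split
  · norm_num
  · positivity

lemma wfun_even (K α : ℝ) (k : ℤ) : wfun K α (-k) = wfun K α k := by
  unfold wfun
  rcases eq_or_ne k 0 with rfl | hk
  · simp
  · rw [if_neg (by omega), if_neg hk]
    push_cast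
    rw [abs_neg]

lemma wfun_sum_le {K α : ℝ} (hK : 0 < K) (hα0 : 0 ≤ α) :
    ∀ L : ℕ, ∑ d ∈ Finset.Icc (-(L:ℤ)) (L:ℤ), wfun K α d ≤
      1 + 2 * K * ∑ k ∈ Finset.range L, ((k:ℝ)+1) ^ (-α) := by
  intro L
  induction L with
  | zero => simp [wfun]
  | succ L ih =>
    have hset : Finset.Icc (-((L+1:ℕ):ℤ)) ((L+1:ℕ):ℤ) =
        insert ((L+1:ℕ):ℤ) (insert (-((L+1:ℕ):ℤ)) (Finset.Icc (-(L:ℕ):ℤ) ((L:ℕ):ℤ))) := by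
      ext d
      simp only [Finset.mem_Icc, Finset.mem_insert]
      push_cast
      omega
    rw [hset, Finset.sum_insert (by
        simp only [Finset.mem_insert, Finset.mem_Icc]
        push_cast
        omega), Finset.sum_insert (by
        simp only [Finset.mem_Icc]
        push_cast
        omega)]
    have hw : wfun K α ((L+1:ℕ):ℤ) = K * (((L:ℕ):ℝ)+1) ^ (-α) := by
      unfold wfun
      rw [if_neg (by exact_mod_cast Nat.succ_ne_zero L)]
      congr 2
      push_cast
      rw [abs_of_pos (by positivity)]
    have hw2 : wfun K α (-((L+1:ℕ):ℤ)) = K * (((L:ℕ):ℝ)+1) ^ (-α) := by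
      rw [wfun_even, hw]
    rw [hw, hw2, Finset.sum_range_succ]
    have hx : (0:ℝ) ≤ ((L:ℕ):ℝ) + 1 := by positivity
    nlinarith [ih]

lemma aux_energy (μ : Measure UnitAddCircle) [IsProbabilityMeasure μ]
    (K α : ℝ) (hK : 0 < K) (hα0 : 0 ≤ α)
    (hdecay : ∀ n : ℤ, n ≠ 0 → ‖∫ x, fourier (-n) x ∂μ‖ ≤ K * |(n : ℝ)| ^ (-α))
    (a : ℤ → ℂ) (F : Finset ℤ) (M : ℕ) (hF : F ⊆ Finset.Icc (-(M:ℤ)) (M:ℤ)) :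
    ∫ t, ‖∑ n ∈ F, a n * fourier n t‖ ^ 2 ∂μ ≤
      (1 + 2 * K * ∑ k ∈ Finset.range (2*M), ((k:ℝ)+1) ^ (-α)) * ∑ n ∈ F, ‖a n‖ ^ 2 := by
  classical
  have hcont : ∀ g : UnitAddCircle → ℂ, Continuous g → Integrable g μ := fun g hg =>
    hg.integrable_of_hasCompactSupport (HasCompactSupport.of_compactSpace g)
  set g : UnitAddCircle → ℂ := fun t => ∑ n ∈ F, a n * fourier n t with hg_def
  have hgcont : Continuous g := by
    apply continuous_finset_sum
    intro n _
    exact continuous_const.mul (fourier n).continuous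
  set c : ℤ → ℂ := fun k => ∫ x, fourier k x ∂μ with hc_def
  have hc : ∀ k : ℤ, ‖c k‖ ≤ wfun K α k := by
    intro k
    rcases eq_or_ne k 0 with rfl | hk
    · have : c 0 = 1 := by
        simp only [hc_def]
        simp [fourier_zero]
      rw [this]
      simp [wfun]
    · have : c k = ∫ x, fourier (-(-k)) x ∂μ := by rw [neg_neg]
      rw [this]
      unfold wfun
      rw [if_neg hk]
      have := hdecay (-k) (by omega)
      calc ‖∫ x, fourier (-(-k)) x ∂μ‖ ≤ K * |((-k : ℤ) : ℝ)| ^ (-α) := this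
        _ = K * |(k:ℝ)| ^ (-α) := by push_cast; rw [abs_neg]
  -- expansion
  have hexp : ∀ t, g t * conj (g t) = ∑ n ∈ F, ∑ m ∈ F, (a n * conj (a m)) * fourier (n - m) t := by
    intro t
    rw [hg_def]
    simp only [map_sum, map_mul, Finset.sum_mul_sum, ← fourier_neg]
    apply Finset.sum_congr rfl
    intro n _
    apply Finset.sum_congr rfl
    intro m _
    calc a n * fourier n t * ((starRingEnd ℂ) (a m) * fourier (-m) t)
        = (a n * (starRingEnd ℂ) (a m)) * (fourier n t * fourier (-m) t) := by ring
      _ = (a n * (starRingEnd ℂ) (a m)) * fourier (n - m) t := by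
          rw [← fourier_add, ← sub_eq_add_neg]
  have hint : ∫ t, g t * conj (g t) ∂μ = ∑ n ∈ F, ∑ m ∈ F, (a n * conj (a m)) * c (n - m) := by
    rw [MeasureTheory.integral_congr_ae (Filter.Eventually.of_forall hexp)]
    rw [MeasureTheory.integral_finset_sum]
    · apply Finset.sum_congr rfl
      intro n _
      rw [MeasureTheory.integral_finset_sum]
      · apply Finset.sum_congr rfl
        intro m _
        exact MeasureTheory.integral_const_mul _ _
      · intro m _
        exact (hcont _ (continuous_const.mul (fourier (n-m)).continuous))
    · intro n _
      apply integrable_finset_sum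
      intro m _
      exact (hcont _ (continuous_const.mul (fourier (n-m)).continuous))
  have hGint : Integrable (fun t : UnitAddCircle => g t * conj (g t)) μ :=
    hcont _ (Continuous.mul hgcont (Complex.continuous_conj.comp hgcont))
  have hre : ∫ t, ‖g t‖ ^ 2 ∂μ = (∫ t, g t * conj (g t) ∂μ).re := by
    calc ∫ t, ‖g t‖ ^ 2 ∂μ = ∫ t, RCLike.re (g t * conj (g t)) ∂μ := by
          apply integral_congr_ae
          apply Filter.Eventually.of_forall
          intro t
          change ‖g t‖ ^ 2 = (g t * (starRingEnd ℂ) (g t)).re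
          rw [Complex.mul_conj]
          simp [Complex.normSq_eq_norm_sq, ← Complex.ofReal_pow]
      _ = RCLike.re (∫ t, g t * conj (g t) ∂μ) := integral_re hGint
      _ = (∫ t, g t * conj (g t) ∂μ).re := rfl
  rw [hre, hint]
  -- bound
  calc (∑ n ∈ F, ∑ m ∈ F, (a n * conj (a m)) * c (n - m)).re
      ≤ ‖∑ n ∈ F, ∑ m ∈ F, (a n * conj (a m)) * c (n - m)‖ := Complex.re_le_norm _
    _ ≤ ∑ n ∈ F, ∑ m ∈ F, ‖a n‖ * ‖a m‖ * wfun K α (n - m) := by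
        refine (norm_sum_le _ _).trans ?_
        apply Finset.sum_le_sum
        intro n _
        refine (norm_sum_le _ _).trans ?_
        apply Finset.sum_le_sum
        intro m _
        rw [norm_mul, norm_mul, RCLike.norm_conj]
        exact mul_le_mul_of_nonneg_left (hc _) (by positivity)
    _ ≤ ∑ n ∈ F, ∑ m ∈ F, (‖a n‖^2 + ‖a m‖^2) / 2 * wfun K α (n - m) := by
        apply Finset.sum_le_sum
        intro n _
        apply Finset.sum_le_sum
        intro m _
        apply mul_le_mul_of_nonneg_right _ (wfun_nonneg hK _)
        nlinarith [sq_nonneg (‖a n‖ - ‖a m‖)]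
    _ ≤ (1 + 2 * K * ∑ k ∈ Finset.range (2*M), ((k:ℝ)+1) ^ (-α)) * ∑ n ∈ F, ‖a n‖ ^ 2 := by
        set R : ℝ := 1 + 2 * K * ∑ k ∈ Finset.range (2*M), ((k:ℝ)+1) ^ (-α) with hR_def
        have hrow : ∀ n ∈ F, ∑ m ∈ F, wfun K α (n - m) ≤ R := by
          intro n hn
          have hinj : Set.InjOn (fun m : ℤ => n - m) F := fun x _ y _ hxy => by dsimp only at hxy; omega
          rw [← Finset.sum_image hinj]
          have hsub : F.image (fun m : ℤ => n - m) ⊆ Finset.Icc (-(2*M:ℤ)) (2*M:ℤ) := by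
            intro d hd
            rw [Finset.mem_image] at hd
            obtain ⟨m, hm, rfl⟩ := hd
            have h1 := Finset.mem_Icc.1 (hF hn)
            have h2 := Finset.mem_Icc.1 (hF hm)
            rw [Finset.mem_Icc]
            omega
          calc ∑ d ∈ F.image (fun m : ℤ => n - m), wfun K α d
              ≤ ∑ d ∈ Finset.Icc (-(2*M:ℤ)) (2*M:ℤ), wfun K α d :=
                Finset.sum_le_sum_of_subset_of_nonneg hsub (fun d _ _ => wfun_nonneg hK d)
            _ ≤ 1 + 2 * K * ∑ k ∈ Finset.range (2*M), ((k:ℝ)+1) ^ (-α) := by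
                have := wfun_sum_le hK hα0 (2*M)
                push_cast at this ⊢
                linarith [this]
        have hcol : ∀ m ∈ F, ∑ n ∈ F, wfun K α (n - m) ≤ R := by
          intro m hm
          have : ∑ n ∈ F, wfun K α (n - m) = ∑ n ∈ F, wfun K α (m - n) := by
            apply Finset.sum_congr rfl
            intro n _
            rw [← wfun_even K α (m - n), neg_sub]
          rw [this]
          exact hrow m hm
        have hRnonneg : 0 ≤ R := by
          rw [hR_def]
          have : (0:ℝ) ≤ ∑ k ∈ Finset.range (2*M), ((k:ℝ)+1) ^ (-α) :=
            Finset.sum_nonneg fun k _ => by positivity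
          positivity
        calc ∑ n ∈ F, ∑ m ∈ F, (‖a n‖^2 + ‖a m‖^2) / 2 * wfun K α (n - m)
            = (∑ n ∈ F, ∑ m ∈ F, ‖a n‖^2 / 2 * wfun K α (n - m))
              + (∑ n ∈ F, ∑ m ∈ F, ‖a m‖^2 / 2 * wfun K α (n - m)) := by
              rw [← Finset.sum_add_distrib]
              apply Finset.sum_congr rfl
              intro n _
              rw [← Finset.sum_add_distrib]
              apply Finset.sum_congr rfl
              intro m _
              ring
          _ ≤ (∑ n ∈ F, ‖a n‖^2 / 2 * R) + (∑ m ∈ F, ‖a m‖^2 / 2 * R) := by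
              apply add_le_add
              · apply Finset.sum_le_sum
                intro n hn
                rw [← Finset.mul_sum]
                exact mul_le_mul_of_nonneg_left (hrow n hn) (by positivity)
              · rw [Finset.sum_comm]
                apply Finset.sum_le_sum
                intro m hm
                rw [← Finset.mul_sum]
                exact mul_le_mul_of_nonneg_left (hcol m hm) (by positivity)
          _ = R * ∑ n ∈ F, ‖a n‖ ^ 2 := by
              rw [← Finset.sum_add_distrib, Finset.mul_sum]
              apply Finset.sum_congr rfl
              intro n _
              ring

lemma aux_block (μ : Measure UnitAddCircle) [IsProbabilityMeasure μ]
    (K α s p : ℝ) (hK : 0 < K) (hα0 : 0 ≤ α)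
    (hdecay : ∀ n : ℤ, n ≠ 0 → ‖∫ x, fourier (-n) x ∂μ‖ ≤ K * |(n : ℝ)| ^ (-α))
    (hs0 : 0 < s) (hs1 : s ≤ 1) (hαs : 1 - α ≤ s) (hp0 : 0 < p)
    (a : ℤ → ℂ) (j : ℕ) (F : Finset ℤ)
    (hFsub : F ⊆ Finset.Icc (-(2^(j+1):ℤ)) (2^(j+1):ℤ))
    (hFlow : ∀ n ∈ F, (2:ℤ)^j < |n|) :
    ∫ t, ‖∑ n ∈ F, a n * fourier n t‖^2 ∂μ ≤
      (1 + 8*K/s) * ((2:ℝ) ^ (s - 2*p)) ^ j * ∑ n ∈ F, ‖a n‖^2 * (1 + (n:ℝ)^2) ^ p := by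
  have hcast : ((2^(j+1) : ℕ) : ℤ) = 2^(j+1) := by push_cast; ring
  have h1 := aux_energy μ K α hK hα0 hdecay a F (2^(j+1)) (by rw [hcast]; exact hFsub)
  set A : ℝ := ∑ k ∈ Finset.range (2*2^(j+1)), ((k:ℝ)+1) ^ (-α) with hA_def
  have hA0 : 0 ≤ A := Finset.sum_nonneg fun k _ => by positivity
  set g : ℝ := (2:ℝ) ^ s with hg_def
  have hg1 : 1 ≤ g := by
    rw [hg_def, ← Real.rpow_zero 2]
    exact Real.rpow_le_rpow_of_exponent_le one_le_two hs0.le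
  have hg2 : g ≤ 2 := by
    rw [hg_def]
    calc (2:ℝ) ^ s ≤ (2:ℝ) ^ (1:ℝ) := Real.rpow_le_rpow_of_exponent_le one_le_two hs1
      _ = 2 := Real.rpow_one 2
  have hgj1 : (1:ℝ) ≤ g ^ j := one_le_pow₀ hg1
  have hA : A ≤ g ^ j * 4 / s := by
    have hσ := aux_sum_rpow hα0 hs0 hs1 hαs (2*2^(j+1))
    rw [← hA_def] at hσ
    have hc2 : ((2*2^(j+1) : ℕ) : ℝ) = (2:ℝ)^(j+2) := by push_cast; ring
    rw [hc2] at hσ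
    have hrw : ((2:ℝ)^(j+2:ℕ))^s = g^(j+2) := by
      rw [← Real.rpow_natCast_mul (by norm_num : (0:ℝ) ≤ 2) (j+2) s,
        mul_comm ((j+2:ℕ):ℝ) s, Real.rpow_mul_natCast (by norm_num : (0:ℝ) ≤ 2) s (j+2)]
    rw [hrw] at hσ
    have hstep : g^(j+2) ≤ g^j * 4 := by
      have he : g^(j+2) = g^j * g^2 := by ring
      rw [he]
      have h4 : g^2 ≤ 4 := by nlinarith
      have := pow_nonneg (by linarith : (0:ℝ) ≤ g) j
      nlinarith
    calc A ≤ g^(j+2)/s := hσ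
      _ ≤ g^j * 4 / s := by gcongr
  have hfac : 1 + 2 * K * A ≤ (1 + 8*K/s) * g^j := by
    have h2 : 2 * K * A ≤ 2 * K * (g^j * 4 / s) := by
      apply mul_le_mul_of_nonneg_left hA (by linarith)
    have h3 : 2 * K * (g^j * 4 / s) = (8*K/s) * g^j := by ring
    nlinarith [hgj1, h2]
  -- coefficient bound
  set h2p : ℝ := (2:ℝ) ^ (2*p) with hh_def
  have hh0 : 0 < h2p := Real.rpow_pos_of_pos (by norm_num) _
  have hhj0 : 0 < h2p ^ j := pow_pos hh0 j
  have hcoef : (∑ n ∈ F, ‖a n‖ ^ 2) * h2p ^ j ≤ ∑ n ∈ F, ‖a n‖^2 * (1 + (n:ℝ)^2) ^ p := by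
    rw [Finset.sum_mul]
    apply Finset.sum_le_sum
    intro n hn
    apply mul_le_mul_of_nonneg_left _ (sq_nonneg _)
    -- h2p ^ j ≤ (1 + n^2)^p
    have hkey : h2p ^ j = (((2:ℝ)^j)^2) ^ p := by
      rw [hh_def, ← Real.rpow_mul_natCast (by norm_num : (0:ℝ) ≤ 2) (2*p) j,
        mul_comm (2*p) ((j:ℕ):ℝ), Real.rpow_natCast_mul (by norm_num : (0:ℝ) ≤ 2) j (2*p),
        ← Real.rpow_natCast_mul (pow_nonneg (by norm_num : (0:ℝ) ≤ 2) j) 2 p]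
      norm_num
    rw [hkey]
    apply Real.rpow_le_rpow (by positivity) _ hp0.le
    have hn2 : (2:ℝ)^j ≤ |(n:ℝ)| := by
      have := hFlow n hn
      have h5 : ((2:ℤ)^j : ℤ) + 1 ≤ |n| := by omega
      have h6 : (((2:ℤ)^j : ℤ) : ℝ) + 1 ≤ |(n:ℝ)| := by
        rw [← Int.cast_abs]
        exact_mod_cast h5
      push_cast at h6
      linarith
    have := pow_le_pow_left₀ (by positivity : (0:ℝ) ≤ (2:ℝ)^j) hn2 2
    rw [sq_abs] at this
    linarith
  -- combine
  have hS0 : 0 ≤ ∑ n ∈ F, ‖a n‖ ^ 2 := Finset.sum_nonneg fun n _ => sq_nonneg _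
  have hE0 : 0 ≤ ∑ n ∈ F, ‖a n‖^2 * (1 + (n:ℝ)^2) ^ p :=
    Finset.sum_nonneg fun n _ => by positivity
  have hq : ((2:ℝ) ^ (s - 2*p)) ^ j = g ^ j / h2p ^ j := by
    rw [hg_def, hh_def, ← div_pow, ← Real.rpow_sub (by norm_num)]
  have hC0 : (0:ℝ) < 1 + 8*K/s := by positivity
  calc ∫ t, ‖∑ n ∈ F, a n * fourier n t‖^2 ∂μ
      ≤ (1 + 2 * K * A) * ∑ n ∈ F, ‖a n‖ ^ 2 := h1
    _ ≤ ((1 + 8*K/s) * g^j) * ∑ n ∈ F, ‖a n‖ ^ 2 := by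
        apply mul_le_mul_of_nonneg_right hfac hS0
    _ ≤ ((1 + 8*K/s) * g^j) * ((∑ n ∈ F, ‖a n‖^2 * (1 + (n:ℝ)^2) ^ p) / h2p ^ j) := by
        apply mul_le_mul_of_nonneg_left _ (by positivity)
        rw [le_div_iff₀ hhj0]
        exact hcoef
    _ = (1 + 8*K/s) * ((2:ℝ) ^ (s - 2*p)) ^ j * ∑ n ∈ F, ‖a n‖^2 * (1 + (n:ℝ)^2) ^ p := by
        rw [hq]
        ring

lemma aux_int_sqrt (μ : Measure UnitAddCircle) [IsProbabilityMeasure μ]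
    (G : UnitAddCircle → ℝ) (hGc : Continuous G) (hG0 : ∀ t, 0 ≤ G t)
    {B τ : ℝ} (hτ : 0 < τ) (hGB : ∫ t, G t ∂μ ≤ B) :
    ∫ t, Real.sqrt (G t) ∂μ ≤ (τ⁻¹ * B + τ) / 2 := by
  have hcont : ∀ g : UnitAddCircle → ℝ, Continuous g → Integrable g μ := fun g hg =>
    hg.integrable_of_hasCompactSupport (HasCompactSupport.of_compactSpace g)
  have hint : Integrable G μ := hcont G hGc
  have hint2 : Integrable (fun t => (τ⁻¹ * G t + τ)/2) μ :=
    ((hint.const_mul _).add (integrable_const _)).div_const _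
  have h1 : ∫ t, Real.sqrt (G t) ∂μ ≤ ∫ t, (τ⁻¹ * G t + τ)/2 ∂μ := by
    apply integral_mono (hcont _ (Real.continuous_sqrt.comp hGc)) hint2
    intro t
    have := aux_amgm (hG0 t) (inv_pos.2 hτ)
    rwa [one_div, inv_inv] at this
  have h2 : ∫ t, (τ⁻¹ * G t + τ)/2 ∂μ = (τ⁻¹ * ∫ t, G t ∂μ + τ)/2 := by
    rw [integral_div, integral_add (hint.const_mul _) (integrable_const _),
      integral_const_mul, integral_const]
    simp [measure_univ]
  have h3 : τ⁻¹ * ∫ t, G t ∂μ ≤ τ⁻¹ * B :=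
    mul_le_mul_of_nonneg_left hGB (by positivity)
  linarith

/-- If `0 ≤ a ≤ 1`, `μ` is a Borel probability measure on the circle with
`|μ̂(n)| ≤ K|n|^{-a}` for `n ≠ 0`, and `f ∈ L²(𝕋)` belongs to the Sobolev space
`H^p(𝕋)` for some `p > (1-a)/2`, then the Fourier series of `f` converges
`μ`-almost everywhere (symmetric partial sums). -/
theorem fourier_series_converges_ae_of_sobolev
    (μ : Measure UnitAddCircle) [IsProbabilityMeasure μ]
    (K α : ℝ) (hK : 0 < K) (hα0 : 0 ≤ α) (hα1 : α ≤ 1)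
    (hdecay : ∀ n : ℤ, n ≠ 0 → ‖∫ x, fourier (-n) x ∂μ‖ ≤ K * |(n : ℝ)| ^ (-α))
    (f : UnitAddCircle → ℂ) (hf : MemLp f 2 (volume : Measure UnitAddCircle))
    (p : ℝ) (hp : p > (1 - α) / 2)
    (hSobolev : Summable (fun n : ℤ => ‖fourierCoeff f n‖ ^ 2 * (1 + (n : ℝ) ^ 2) ^ p)) :
    ∀ᵐ t ∂μ, ∃ l : ℂ,
      Tendsto (fun N : ℕ =>
          ∑ n ∈ Finset.Icc (-(N : ℤ)) (N : ℤ), fourierCoeff f n * fourier n t)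
        atTop (nhds l) := by
  classical
  set a : ℤ → ℂ := fourierCoeff f with ha_def
  set e : ℤ → ℝ := fun n => ‖a n‖ ^ 2 * (1 + (n : ℝ) ^ 2) ^ p with he_def
  have he0 : ∀ n, 0 ≤ e n := fun n => by positivity
  -- parameters
  have hp0 : 0 < p := lt_of_le_of_lt (by linarith) hp
  set s : ℝ := min 1 ((1 - α)/2 + p) with hs_def
  have hs0 : 0 < s := lt_min one_pos (by linarith)
  have hs1 : s ≤ 1 := min_le_left _ _
  have hαs : 1 - α ≤ s := le_min (by linarith) (by linarith)
  have hsp : s < 2 * p := lt_of_le_of_lt (min_le_right _ _) (by linarith)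
  set q : ℝ := (2:ℝ) ^ (s - 2*p) with hq_def
  have hq0 : 0 < q := Real.rpow_pos_of_pos (by norm_num) _
  have hq1 : q < 1 := Real.rpow_lt_one_of_one_lt_of_neg (by norm_num) (by linarith)
  set r : ℝ := Real.sqrt q with hr_def
  have hr0 : 0 < r := Real.sqrt_pos.2 hq0
  have hr1 : r < 1 := by
    nlinarith [Real.sq_sqrt hq0.le, Real.sqrt_nonneg q]
  have hqr : ∀ j : ℕ, q ^ j = r ^ j * r ^ j := by
    intro j
    have h2 : r ^ 2 = q := Real.sq_sqrt hq0.le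
    calc q ^ j = (r^2)^j := by rw [h2]
      _ = r^j * r^j := by ring
  set C₀ : ℝ := 1 + 8*K/s with hC₀_def
  have hC₀0 : 0 < C₀ := by positivity
  -- trig sums
  set T : Finset ℤ → UnitAddCircle → ℂ := fun F t => ∑ n ∈ F, a n * fourier n t with hT_def
  have hTcont : ∀ F, Continuous (T F) := fun F =>
    continuous_finset_sum _ fun n _ => continuous_const.mul (fourier n).continuous
  have hcont : ∀ {β : Type} [NormedAddCommGroup β] (g : UnitAddCircle → β), Continuous g →
      Integrable g μ := fun g hg =>
    hg.integrable_of_hasCompactSupport (HasCompactSupport.of_compactSpace g)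
  set SS : ℕ → UnitAddCircle → ℂ := fun M t => T (Finset.Icc (-(M:ℤ)) (M:ℤ)) t with hSS_def
  set Ann : ℕ → ℕ → Finset ℤ :=
    fun m M => Finset.Icc (-(M:ℤ)) (M:ℤ) \ Finset.Icc (-(m:ℤ)) (m:ℤ) with hAnn_def
  have hIccsub : ∀ {m M : ℕ}, m ≤ M →
      Finset.Icc (-(m:ℤ)) (m:ℤ) ⊆ Finset.Icc (-(M:ℤ)) (M:ℤ) := by
    intro m M h
    apply Finset.Icc_subset_Icc <;> · push_cast; omega
  have hAnnsum : ∀ (m M : ℕ), m ≤ M → ∀ t, T (Ann m M) t = SS M t - SS m t := by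
    intro m M h t
    exact Finset.sum_sdiff_eq_sub (hIccsub h)
  -- energy sums
  set Sc : ℕ → ℝ := fun M => ∑ n ∈ Finset.Icc (-(M:ℤ)) (M:ℤ), e n with hSc_def
  have hScmono : Monotone Sc := by
    intro m M h
    exact Finset.sum_le_sum_of_subset_of_nonneg (hIccsub h) (fun n _ _ => he0 n)
  have hSctsum : ∀ M, Sc M ≤ ∑' n, e n := fun M =>
    Summable.sum_le_tsum _ (fun n _ => he0 n) hSobolev
  have hAnnE : ∀ (m M : ℕ), m ≤ M → ∑ n ∈ Ann m M, e n = Sc M - Sc m := by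
    intro m M h
    exact Finset.sum_sdiff_eq_sub (hIccsub h)
  set Ej : ℕ → ℝ := fun j => Sc (2^(j+1)) - Sc (2^j) with hEj_def
  have hEjval : ∀ j, Ej j = Sc (2^(j+1)) - Sc (2^j) := fun j => rfl
  have hEj0 : ∀ j, 0 ≤ Ej j := by
    intro j
    rw [hEjval]
    have h := hScmono (Nat.pow_le_pow_right (by norm_num : 1 ≤ 2) (Nat.le_succ j))
    linarith
  have hEsum : Summable Ej := by
    apply summable_of_sum_range_le hEj0
    intro J
    have htel : ∑ j ∈ Finset.range J, Ej j = Sc (2^J) - Sc (2^0) :=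
      Finset.sum_range_sub (fun j => Sc (2^j)) J
    have h1 : (0:ℝ) ≤ Sc (2^0) := Finset.sum_nonneg fun n _ => he0 n
    have h2 := hSctsum (2^J)
    rw [htel]
    linarith
  -- blocks for Φ
  set Φ : ℕ → UnitAddCircle → ℝ := fun j t =>
    ‖T (Ann (2^j) (2^(j+1))) t‖ + ∑ ℓ ∈ Finset.range j,
      Real.sqrt (∑ k ∈ Finset.range (2^(j-ℓ)),
        ‖T (Ann (2^j + k*2^ℓ) (2^j + (k+1)*2^ℓ)) t‖^2) with hΦ_def
  have hΦcont : ∀ j, Continuous (Φ j) := by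
    intro j
    apply Continuous.add
    · exact (hTcont _).norm
    · apply continuous_finset_sum
      intro ℓ _
      apply Real.continuous_sqrt.comp
      apply continuous_finset_sum
      intro k _
      exact ((hTcont _).norm).pow 2
  have hΦ0 : ∀ j t, 0 ≤ Φ j t := by
    intro j t
    apply add_nonneg (norm_nonneg _)
    exact Finset.sum_nonneg fun ℓ _ => Real.sqrt_nonneg _
  -- piece index bounds
  have hpieceidx : ∀ (j ℓ k : ℕ), ℓ < j → k < 2^(j-ℓ) →
      2^j + (k+1)*2^ℓ ≤ 2^(j+1) := by
    intro j ℓ k hℓ hk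
    have hpow : 2^(j-ℓ) * 2^ℓ = 2^j := by rw [← pow_add]; congr 1; omega
    have h2 : (k+1)*2^ℓ ≤ 2^j := by
      calc (k+1)*2^ℓ ≤ 2^(j-ℓ)*2^ℓ := Nat.mul_le_mul_right _ hk
        _ = 2^j := hpow
    have h3 : (2:ℕ)^(j+1) = 2^j + 2^j := by ring
    omega
  -- refined block bound
  have hblock' : ∀ (j m M : ℕ), 2^j ≤ m → M ≤ 2^(j+1) → m ≤ M →
      ∫ t, ‖T (Ann m M) t‖^2 ∂μ ≤ C₀ * q^j * (Sc M - Sc m) := by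
    intro j m M hjm hM hmM
    have hsub : Ann m M ⊆ Finset.Icc (-(2^(j+1):ℤ)) (2^(j+1):ℤ) := by
      intro n hn
      rw [hAnn_def] at hn
      simp only [Finset.mem_sdiff, Finset.mem_Icc] at hn
      simp only [Finset.mem_Icc]
      have hMc : ((M:ℤ)) ≤ 2^(j+1) := by
        have h9 : ((M:ℤ)) ≤ ((2^(j+1) : ℕ) : ℤ) := Nat.cast_le.2 hM
        push_cast at h9
        exact h9
      omega
    have hlow : ∀ n ∈ Ann m M, (2:ℤ)^j < |n| := by
      intro n hn
      rw [hAnn_def] at hn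
      simp only [Finset.mem_sdiff, Finset.mem_Icc, not_and, not_le] at hn
      have hmc : ((2:ℤ))^j ≤ (m:ℤ) := by
        have h9 : ((2^j : ℕ) : ℤ) ≤ (m:ℤ) := Nat.cast_le.2 hjm
        push_cast at h9
        exact h9
      rw [lt_abs]
      omega
    have h := aux_block μ K α s p hK hα0 hdecay hs0 hs1 hαs hp0 a j (Ann m M) hsub hlow
    rw [hAnnE m M hmM] at h
    exact h
  have hblockE : ∀ (j m M : ℕ), 2^j ≤ m → M ≤ 2^(j+1) → m ≤ M →
      ∫ t, ‖T (Ann m M) t‖^2 ∂μ ≤ C₀ * q^j * Ej j := by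
    intro j m M h1 h2 h3
    refine (hblock' j m M h1 h2 h3).trans ?_
    rw [hEjval]
    have ha2 := hScmono h2
    have hb2 := hScmono h1
    have hc2 : (0:ℝ) ≤ C₀ * q^j := by positivity
    nlinarith
  have hrj0 : ∀ j : ℕ, (0:ℝ) < r ^ j := fun j => pow_pos hr0 j
  have hsimp : ∀ j : ℕ, ((r^j)⁻¹ * (C₀ * q^j * Ej j) + r^j)/2 = r^j * (C₀ * Ej j + 1)/2 := by
    intro j
    rw [hqr j]
    field_simp
  -- integral bound for Φ j
  have hΦint_le : ∀ j, ∫ t, Φ j t ∂μ ≤ (1 + (j:ℝ)) * (r^j * (C₀ * Ej j + 1) / 2) := by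
    intro j
    have hterm1 : ∫ t, ‖T (Ann (2^j) (2^(j+1))) t‖ ∂μ ≤ r^j * (C₀ * Ej j + 1) / 2 := by
      have hG : (fun t => ‖T (Ann (2^j) (2^(j+1))) t‖)
          = fun t => Real.sqrt (‖T (Ann (2^j) (2^(j+1))) t‖^2) := by
        funext t
        rw [Real.sqrt_sq (norm_nonneg _)]
      rw [hG]
      have hb := hblockE j (2^j) (2^(j+1)) le_rfl le_rfl
        (Nat.pow_le_pow_right (by norm_num) (Nat.le_succ j))
      have := aux_int_sqrt μ (fun t => ‖T (Ann (2^j) (2^(j+1))) t‖^2)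
        (((hTcont _).norm).pow 2) (fun t => sq_nonneg _) (hrj0 j) hb
      rw [hsimp j] at this
      exact this
    have hterm2 : ∀ ℓ ∈ Finset.range j,
        ∫ t, Real.sqrt (∑ k ∈ Finset.range (2^(j-ℓ)),
          ‖T (Ann (2^j + k*2^ℓ) (2^j + (k+1)*2^ℓ)) t‖^2) ∂μ
        ≤ r^j * (C₀ * Ej j + 1) / 2 := by
      intro ℓ hℓ
      have hℓj : ℓ < j := Finset.mem_range.1 hℓ
      have hGB : ∫ t, (∑ k ∈ Finset.range (2^(j-ℓ)),
          ‖T (Ann (2^j + k*2^ℓ) (2^j + (k+1)*2^ℓ)) t‖^2) ∂μ ≤ C₀ * q^j * Ej j := by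
        rw [integral_finset_sum _ (fun k _ => hcont (fun t => ‖T (Ann (2^j + k*2^ℓ) (2^j + (k+1)*2^ℓ)) t‖^2) (((hTcont _).norm).pow 2))]
        have hple : ∀ k ∈ Finset.range (2^(j-ℓ)),
            ∫ t, ‖T (Ann (2^j + k*2^ℓ) (2^j + (k+1)*2^ℓ)) t‖^2 ∂μ
            ≤ C₀ * q^j * (Sc (2^j + (k+1)*2^ℓ) - Sc (2^j + k*2^ℓ)) := by
          intro k hk
          apply hblock' j _ _ (Nat.le_add_right _ _)
            (hpieceidx j ℓ k hℓj (Finset.mem_range.1 hk))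
            (by
              apply Nat.add_le_add_left
              exact Nat.mul_le_mul_right _ (Nat.le_succ k))
        calc ∑ k ∈ Finset.range (2^(j-ℓ)), ∫ t,
              ‖T (Ann (2^j + k*2^ℓ) (2^j + (k+1)*2^ℓ)) t‖^2 ∂μ
            ≤ ∑ k ∈ Finset.range (2^(j-ℓ)),
              C₀ * q^j * (Sc (2^j + (k+1)*2^ℓ) - Sc (2^j + k*2^ℓ)) :=
              Finset.sum_le_sum hple
          _ = C₀ * q^j * ∑ k ∈ Finset.range (2^(j-ℓ)),
              (Sc (2^j + (k+1)*2^ℓ) - Sc (2^j + k*2^ℓ)) := by rw [Finset.mul_sum]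
          _ = C₀ * q^j * Ej j := by
              rw [Finset.sum_range_sub (fun k => Sc (2^j + k*2^ℓ))]
              have hpow : 2^(j-ℓ) * 2^ℓ = 2^j := by rw [← pow_add]; congr 1; omega
              have h2 : 2^j + 2^(j-ℓ)*2^ℓ = 2^(j+1) := by rw [hpow]; ring
              have h3 : 2^j + 0*2^ℓ = 2^j := by ring
              rw [h2, h3, hEjval]
      have := aux_int_sqrt μ (fun t => ∑ k ∈ Finset.range (2^(j-ℓ)),
          ‖T (Ann (2^j + k*2^ℓ) (2^j + (k+1)*2^ℓ)) t‖^2)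
        (continuous_finset_sum _ fun k _ => ((hTcont _).norm).pow 2)
        (fun t => Finset.sum_nonneg fun k _ => sq_nonneg _) (hrj0 j) hGB
      rw [hsimp j] at this
      exact this
    have hintΦ : ∫ t, Φ j t ∂μ = (∫ t, ‖T (Ann (2^j) (2^(j+1))) t‖ ∂μ)
        + ∑ ℓ ∈ Finset.range j, ∫ t, Real.sqrt (∑ k ∈ Finset.range (2^(j-ℓ)),
          ‖T (Ann (2^j + k*2^ℓ) (2^j + (k+1)*2^ℓ)) t‖^2) ∂μ := by
      rw [hΦ_def]
      rw [integral_add (hcont _ (hTcont _).norm)]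
      · congr 1
        rw [integral_finset_sum]
        intro ℓ _
        apply hcont
        apply Real.continuous_sqrt.comp
        exact continuous_finset_sum _ fun k _ => ((hTcont _).norm).pow 2
      · apply hcont
        apply continuous_finset_sum
        intro ℓ _
        apply Real.continuous_sqrt.comp
        exact continuous_finset_sum _ fun k _ => ((hTcont _).norm).pow 2
    rw [hintΦ]
    calc (∫ t, ‖T (Ann (2^j) (2^(j+1))) t‖ ∂μ)
        + ∑ ℓ ∈ Finset.range j, ∫ t, Real.sqrt (∑ k ∈ Finset.range (2^(j-ℓ)),
          ‖T (Ann (2^j + k*2^ℓ) (2^j + (k+1)*2^ℓ)) t‖^2) ∂μ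
        ≤ r^j * (C₀ * Ej j + 1) / 2
          + ∑ ℓ ∈ Finset.range j, (r^j * (C₀ * Ej j + 1) / 2) :=
          add_le_add hterm1 (Finset.sum_le_sum hterm2)
      _ = (1 + (j:ℝ)) * (r^j * (C₀ * Ej j + 1) / 2) := by
          rw [Finset.sum_const, Finset.card_range]
          push_cast
          ring
  -- summability of bounds
  set u : ℕ → ℝ := fun j => (1 + (j:ℝ)) * (r^j * (C₀ * Ej j + 1) / 2) with hu_def
  have hv : Summable (fun j : ℕ => (1 + (j:ℝ)) * r^j) := by
    have h1 : Summable (fun j : ℕ => (j:ℝ)^1 * r^j) :=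
      summable_pow_mul_geometric_of_norm_lt_one 1
        (by rw [Real.norm_eq_abs, abs_of_pos hr0]; exact hr1)
    have h2 : Summable (fun j : ℕ => r^j) := summable_geometric_of_lt_one hr0.le hr1
    exact (h1.add h2).congr (fun j => by ring)
  have hv0 : ∀ j : ℕ, 0 ≤ (1 + (j:ℝ)) * r^j := fun j => by positivity
  have hvle : ∀ j : ℕ, (1 + (j:ℝ)) * r^j ≤ ∑' i : ℕ, (1 + (i:ℝ)) * r^i := fun j =>
    Summable.le_tsum hv j (fun i _ => hv0 i)
  have hu0 : ∀ j, 0 ≤ u j := by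
    intro j
    rw [hu_def]
    have := hEj0 j
    positivity
  have husum : Summable u := by
    have hEv : Summable (fun j : ℕ => (1 + (j:ℝ)) * r^j * Ej j) := by
      apply Summable.of_nonneg_of_le (fun j => by
        have := hEj0 j
        positivity)
        (fun j => mul_le_mul_of_nonneg_right (hvle j) (hEj0 j))
      exact hEsum.mul_left _
    exact ((hEv.mul_left (C₀/2)).add (hv.mul_left (1/2))).congr (fun j => by rw [hu_def]; ring)
  -- a.e. summability of Φ
  have hΦint : ∀ j, Integrable (Φ j) μ := fun j => hcont _ (hΦcont j)
  have hmeas : ∀ j : ℕ, AEMeasurable (fun t => ENNReal.ofReal (Φ j t)) μ := fun j =>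
    (ENNReal.continuous_ofReal.comp (hΦcont j)).measurable.aemeasurable
  have hlint : ∫⁻ t, ∑' j : ℕ, ENNReal.ofReal (Φ j t) ∂μ < ⊤ := by
    rw [lintegral_tsum hmeas]
    have h1 : ∀ j : ℕ, ∫⁻ t, ENNReal.ofReal (Φ j t) ∂μ = ENNReal.ofReal (∫ t, Φ j t ∂μ) :=
      fun j => (ofReal_integral_eq_lintegral_ofReal (hΦint j) (ae_of_all _ (hΦ0 j))).symm
    calc ∑' j : ℕ, ∫⁻ t, ENNReal.ofReal (Φ j t) ∂μ
        = ∑' j : ℕ, ENNReal.ofReal (∫ t, Φ j t ∂μ) := tsum_congr h1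
      _ ≤ ∑' j : ℕ, ENNReal.ofReal (u j) :=
          ENNReal.tsum_le_tsum fun j => ENNReal.ofReal_le_ofReal (hΦint_le j)
      _ = ENNReal.ofReal (∑' j, u j) := (ENNReal.ofReal_tsum_of_nonneg hu0 husum).symm
      _ < ⊤ := ENNReal.ofReal_lt_top
  have hae : ∀ᵐ t ∂μ, Summable (fun j => Φ j t) := by
    have h2 : ∀ᵐ t ∂μ, ∑' j : ℕ, ENNReal.ofReal (Φ j t) < ⊤ :=
      ae_lt_top' (AEMeasurable.ennreal_tsum hmeas) hlint.ne
    filter_upwards [h2] with t ht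
    have h3 := ENNReal.summable_toReal ht.ne
    apply h3.congr
    intro j
    rw [ENNReal.toReal_ofReal (hΦ0 j t)]
  -- pointwise conclusion
  filter_upwards [hae] with t hst
  have hΔnorm : ∀ j : ℕ, ‖SS (2^(j+1)) t - SS (2^j) t‖ ≤ Φ j t := by
    intro j
    have h1 : T (Ann (2^j) (2^(j+1))) t = SS (2^(j+1)) t - SS (2^j) t :=
      hAnnsum _ _ (Nat.pow_le_pow_right (by norm_num) (Nat.le_succ j)) t
    rw [← h1, hΦ_def]
    exact le_add_of_nonneg_right (Finset.sum_nonneg fun ℓ _ => Real.sqrt_nonneg _)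
  have hΔsum : Summable (fun j : ℕ => SS (2^(j+1)) t - SS (2^j) t) :=
    Summable.of_norm_bounded hst hΔnorm
  set l : ℂ := SS (2^0) t + ∑' j : ℕ, (SS (2^(j+1)) t - SS (2^j) t) with hl_def
  have hdyad : Tendsto (fun J : ℕ => SS (2^J) t) atTop (nhds l) := by
    have h1 := hΔsum.hasSum.tendsto_sum_nat
    have h2 : (fun J : ℕ => SS (2^J) t)
        = fun J => SS (2^0) t + ∑ j ∈ Finset.range J, (SS (2^(j+1)) t - SS (2^j) t) := by
      funext J
      rw [Finset.sum_range_sub (fun j => SS (2^j) t)]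
      ring
    rw [h2, hl_def]
    exact tendsto_const_nhds.add h1
  set Q : ℕ → ℝ := fun j => ∑ ℓ ∈ Finset.range j,
    Real.sqrt (∑ k ∈ Finset.range (2^(j-ℓ)),
      ‖SS (2^j + (k+1)*2^ℓ) t - SS (2^j + k*2^ℓ) t‖^2) with hQ_def
  have hQ0' : ∀ j, 0 ≤ Q j := fun j => Finset.sum_nonneg fun ℓ _ => Real.sqrt_nonneg _
  have hQΦ : ∀ j, Q j ≤ Φ j t := by
    intro j
    have hQeq : Q j = ∑ ℓ ∈ Finset.range j,
        Real.sqrt (∑ k ∈ Finset.range (2^(j-ℓ)),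
          ‖T (Ann (2^j + k*2^ℓ) (2^j + (k+1)*2^ℓ)) t‖^2) := by
      rw [hQ_def]
      apply Finset.sum_congr rfl
      intro ℓ _
      congr 1
      apply Finset.sum_congr rfl
      intro k _
      congr 1
      rw [hAnnsum _ _ (by
        apply Nat.add_le_add_left
        exact Nat.mul_le_mul_right _ (Nat.le_succ k)) t]
    rw [hQeq, hΦ_def]
    exact le_add_of_nonneg_left (norm_nonneg _)
  have hQtend : Tendsto Q atTop (nhds 0) :=
    squeeze_zero hQ0' hQΦ hst.tendsto_atTop_zero
  have hchain : ∀ N : ℕ, 1 ≤ N → ‖SS N t - SS (2 ^ Nat.log 2 N) t‖ ≤ Q (Nat.log 2 N) := by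
    intro N hN
    set j := Nat.log 2 N with hj_def
    have h1 : 2^j ≤ N := Nat.pow_log_le_self 2 (by omega)
    have h2 : N < 2^(j+1) := Nat.lt_pow_succ_log_self (by norm_num) N
    have hd : N - 2^j < 2^j := by
      have h3 : (2:ℕ)^(j+1) = 2^j + 2^j := by ring
      omega
    have h4 := aux_chain (fun M => SS M t) j (2^j) (N - 2^j) hd
    rw [show 2^j + (N - 2^j) = N from by omega] at h4
    exact h4
  have hlog : Tendsto (fun N : ℕ => Nat.log 2 N) atTop atTop := by
    apply Filter.tendsto_atTop_atTop.2
    intro b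
    refine ⟨2^b, fun N hN => ?_⟩
    have hN0 : N ≠ 0 := by
      have : (0:ℕ) < 2^b := by positivity
      omega
    exact (Nat.le_log_iff_pow_le (by norm_num) hN0).2 hN
  have hS2 : Tendsto (fun N : ℕ => SS (2 ^ Nat.log 2 N) t) atTop (nhds l) := hdyad.comp hlog
  have hQ2 : Tendsto (fun N : ℕ => Q (Nat.log 2 N)) atTop (nhds 0) := hQtend.comp hlog
  have hnorm : Tendsto (fun N : ℕ => ‖SS N t - l‖) atTop (nhds 0) := by
    apply squeeze_zero' (Eventually.of_forall fun N => norm_nonneg _)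
      (g := fun N => Q (Nat.log 2 N) + ‖SS (2 ^ Nat.log 2 N) t - l‖)
    · filter_upwards [eventually_ge_atTop 1] with N hN
      calc ‖SS N t - l‖ = ‖(SS N t - SS (2 ^ Nat.log 2 N) t) + (SS (2 ^ Nat.log 2 N) t - l)‖ := by
            rw [sub_add_sub_cancel]
        _ ≤ ‖SS N t - SS (2 ^ Nat.log 2 N) t‖ + ‖SS (2 ^ Nat.log 2 N) t - l‖ := norm_add_le _ _
        _ ≤ Q (Nat.log 2 N) + ‖SS (2 ^ Nat.log 2 N) t - l‖ :=
            add_le_add (hchain N hN) le_rfl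
    · have h5 : Tendsto (fun N : ℕ => ‖SS (2 ^ Nat.log 2 N) t - l‖) atTop (nhds 0) :=
        tendsto_iff_norm_sub_tendsto_zero.1 hS2
      simpa using hQ2.add h5
  exact ⟨l, tendsto_iff_norm_sub_tendsto_zero.2 hnorm⟩
end

section
/- Let (a_n)_{n≥1} be a sequence of complex numbers and (X_n)_{n≥1} a sequence of complex-valued random variables with E(|X_n|²) = 1 for all n, and assume L := Σ_{n,m=1}^∞ |a_n| |a_m| |E(X_n · conj(X_m))| · log₂(n+1) · log₂(m+1) < ∞. Then the subsequence of dyadic partial sums S_{2^k} = Σ_{n=1}^{2^k} a_n X_n (k = 0, 1, 2, …) converges almost surely as k → ∞, and E( (sup_{k≥0} |S_{2^k}|)² ) ≤ 4 L. -/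
open MeasureTheory Filter
open scoped ENNReal


lemma MR.enn_CS (f g : ℕ → ℝ≥0∞) :
    ∑' n, f n * g n ≤ (∑' n, f n ^ 2) ^ (1/2:ℝ) * (∑' n, g n ^ 2) ^ (1/2:ℝ) := by
  have hpq : Real.HolderConjugate 2 2 := Real.HolderConjugate.two_two
  have h := ENNReal.lintegral_mul_le_Lp_mul_Lq (Measure.count : Measure ℕ) hpq
    (f := f) (g := g) (measurable_from_nat (f := f)).aemeasurable
    (measurable_from_nat (f := g)).aemeasurable
  rw [MeasureTheory.lintegral_count] at h
  simp_rw [Pi.mul_apply, MeasureTheory.lintegral_count] at h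
  have h2 : ∀ x : ℝ≥0∞, x ^ (2:ℝ) = x ^ (2:ℕ) := fun x => by
    rw [← ENNReal.rpow_natCast]; norm_num
  simp_rw [h2] at h
  exact h

lemma MR.iSup_sq {u : ℕ → ℝ≥0∞} (hu : Monotone u) : (⨆ n, u n) ^ 2 = ⨆ n, u n ^ 2 := by
  apply le_antisymm
  · rw [sq, ENNReal.iSup_mul]
    refine iSup_le fun i => ?_
    rw [ENNReal.mul_iSup]
    refine iSup_le fun j => ?_
    calc u i * u j ≤ u (max i j) * u (max i j) :=
          mul_le_mul' (hu (le_max_left i j)) (hu (le_max_right i j))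
      _ = u (max i j) ^ 2 := (sq _).symm
      _ ≤ ⨆ n, u n ^ 2 := le_iSup (fun n => u n ^ 2) (max i j)
  · exact iSup_le fun n => by gcongr; exact le_iSup u n
lemma MR.rpow_half_sq (x : ℝ≥0∞) : (x ^ (1/2:ℝ)) ^ 2 = x := by
  rw [← ENNReal.rpow_natCast (x ^ (1/2:ℝ)), ← ENNReal.rpow_mul]
  norm_num

lemma MR.lintegral_sum_sq_le {Ω : Type*} [MeasurableSpace Ω] {μ : Measure Ω}
    (F : ℕ → Ω → ℝ≥0∞) (hF : ∀ j, AEMeasurable (F j) μ) (J : ℕ) :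
    (∫⁻ ω, (∑ j ∈ Finset.range J, F j ω) ^ 2 ∂μ) ^ (1/2:ℝ) ≤
      ∑ j ∈ Finset.range J, (∫⁻ ω, (F j ω) ^ 2 ∂μ) ^ (1/2:ℝ) := by
  have h2 : ∀ x : ℝ≥0∞, x ^ (2:ℝ) = x ^ (2:ℕ) := fun x => by
    rw [← ENNReal.rpow_natCast]; norm_num
  induction J with
  | zero => simp [ENNReal.zero_rpow_of_pos]
  | succ J ih =>
    simp_rw [Finset.sum_range_succ]
    have hadd := ENNReal.lintegral_Lp_add_le (p := (2:ℝ))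
      (f := fun ω => ∑ j ∈ Finset.range J, F j ω) (g := F J)
      (Finset.aemeasurable_fun_sum _ fun j _ => hF j) (hF J) one_le_two
    simp_rw [Pi.add_apply, h2] at hadd
    exact hadd.trans (add_le_add_left ih _)

lemma MR.lintegral_tsum_sq_le {Ω : Type*} [MeasurableSpace Ω] {μ : Measure Ω}
    (F : ℕ → Ω → ℝ≥0∞) (hF : ∀ j, AEMeasurable (F j) μ) :
    ∫⁻ ω, (∑' j, F j ω) ^ 2 ∂μ ≤ (∑' j, (∫⁻ ω, (F j ω) ^ 2 ∂μ) ^ (1/2:ℝ)) ^ 2 := by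
  have hmono : ∀ ω, Monotone fun J => ∑ j ∈ Finset.range J, F j ω := fun ω _ _ h =>
    Finset.sum_le_sum_of_subset (Finset.range_subset_range.mpr h)
  have hpt : ∀ ω, (∑' j, F j ω) ^ 2 = ⨆ J, (∑ j ∈ Finset.range J, F j ω) ^ 2 := fun ω => by
    rw [ENNReal.tsum_eq_iSup_nat, MR.iSup_sq (hmono ω)]
  simp_rw [hpt]
  rw [lintegral_iSup' (fun J => by
      exact (Finset.aemeasurable_fun_sum _ fun j _ => hF j).pow_const 2)
    (ae_of_all _ fun ω J K h => by dsimp only; exact pow_le_pow_left' (hmono ω h) 2)]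
  refine iSup_le fun J => ?_
  have h := MR.lintegral_sum_sq_le F hF J
  calc ∫⁻ ω, (∑ j ∈ Finset.range J, F j ω) ^ 2 ∂μ
      = ((∫⁻ ω, (∑ j ∈ Finset.range J, F j ω) ^ 2 ∂μ) ^ (1/2:ℝ)) ^ 2 :=
        (MR.rpow_half_sq _).symm
    _ ≤ (∑ j ∈ Finset.range J, (∫⁻ ω, (F j ω) ^ 2 ∂μ) ^ (1/2:ℝ)) ^ 2 := by gcongr
    _ ≤ (∑' j, (∫⁻ ω, (F j ω) ^ 2 ∂μ) ^ (1/2:ℝ)) ^ 2 := by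
        gcongr; exact ENNReal.sum_le_tsum _

lemma MR.sum_inv_sq_le (N : ℕ) : ∑ k ∈ Finset.range N, (1:ℝ)/((k:ℝ)+1)^2 ≤ 2 := by
  have key : ∀ N : ℕ, ∑ k ∈ Finset.range (N+1), (1:ℝ)/((k:ℝ)+1)^2 ≤ 2 - 1/((N:ℝ)+1) := by
    intro N
    induction N with
    | zero => norm_num
    | succ N ih =>
      rw [Finset.sum_range_succ]
      have h1 : (0:ℝ) < (N:ℝ) + 1 := by positivity
      have h2 : (0:ℝ) < (N:ℝ) + 2 := by positivity
      have hstep : (1:ℝ)/((N:ℝ)+1+1)^2 ≤ 1/((N:ℝ)+1) - 1/((N:ℝ)+1+1) := by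
        rw [div_sub_div _ _ (by positivity) (by positivity),
          div_le_div_iff₀ (by positivity) (by positivity)]
        nlinarith
      push_cast
      push_cast at ih
      linarith
  match N with
  | 0 => simp
  | (M+1) =>
    have hN := key M
    have hpos : (0:ℝ) < 1/((M:ℝ)+1) := by positivity
    linarith

lemma MR.tsum_ofReal_le (v : ℕ → ℝ) (hv : ∀ n, 0 ≤ v n) (c : ℝ)
    (hc : ∀ N, ∑ k ∈ Finset.range N, v k ≤ c) :
    ∑' k, ENNReal.ofReal (v k) ≤ ENNReal.ofReal c := by
  rw [ENNReal.tsum_eq_iSup_sum]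
  refine iSup_le fun s => ?_
  obtain ⟨N, hN⟩ := s.exists_nat_subset_range
  calc ∑ k ∈ s, ENNReal.ofReal (v k) ≤ ∑ k ∈ Finset.range N, ENNReal.ofReal (v k) :=
        Finset.sum_le_sum_of_subset hN
    _ = ENNReal.ofReal (∑ k ∈ Finset.range N, v k) :=
        (ENNReal.ofReal_sum_of_nonneg fun k _ => hv k).symm
    _ ≤ ENNReal.ofReal c := ENNReal.ofReal_le_ofReal (hc N)

set_option maxHeartbeats 1000000 in
lemma MR.tsum_weights : ∑' j : ℕ, ((ENNReal.ofReal (max 1 ((j:ℝ)-1)))⁻¹) ^ 2 ≤ 4 := by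
  set u : ℕ → ℝ≥0∞ := fun j => ((ENNReal.ofReal (max 1 ((j:ℝ)-1)))⁻¹) ^ 2 with hu
  have h0 : u 0 = 1 := by simp [hu]
  have h1 : u 1 = 1 := by simp [hu]
  have htail : ∀ j : ℕ, u (j+2) = ENNReal.ofReal (1/((j:ℝ)+1)^2) := by
    intro j
    have hj : (0:ℝ) ≤ (j:ℝ) := Nat.cast_nonneg j
    simp only [hu]
    rw [show (((j+2:ℕ)):ℝ) - 1 = (j:ℝ)+1 by push_cast; ring,
      max_eq_right (by linarith : (1:ℝ) ≤ (j:ℝ)+1),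
      ← ENNReal.ofReal_inv_of_pos (by positivity),
      ← ENNReal.ofReal_pow (by positivity)]
    congr 1
    field_simp
  calc ∑' j, u j = u 0 + ∑' j, u (j+1) := tsum_eq_zero_add' ENNReal.summable
    _ = u 0 + (u 1 + ∑' j, u (j+2)) := by rw [tsum_eq_zero_add' ENNReal.summable]
    _ ≤ 1 + (1 + 2) := by
        rw [h0, h1]
        gcongr
        calc ∑' j, u (j+2) = ∑' j : ℕ, ENNReal.ofReal (1/((j:ℝ)+1)^2) := by
                exact tsum_congr htail
            _ ≤ ENNReal.ofReal 2 := MR.tsum_ofReal_le _ (fun n => by positivity) 2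
                (fun N => MR.sum_inv_sq_le N)
            _ = 2 := by norm_num
    _ = 4 := by norm_num

lemma MR.sum_blocks {M : Type*} [AddCommMonoid M] (f : ℕ → M) (k : ℕ) :
    ∑ j ∈ Finset.range (k+1), ∑ n ∈ Finset.Ioc (2^j/2) (2^j), f n
      = ∑ n ∈ Finset.Ioc 0 (2^k), f n := by
  induction k with
  | zero => simp
  | succ k ih =>
    rw [Finset.sum_range_succ, ih, show 2^(k+1)/2 = 2^k by rw [pow_succ]; omega]
    exact Finset.sum_Ioc_consecutive f (Nat.zero_le _) (Nat.pow_le_pow_right (by norm_num) (by omega))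

lemma MR.log_block_bound {j n : ℕ} (hn : n ∈ Finset.Ioc (2^j/2) (2^j)) :
    max 1 ((j:ℝ)-1) ≤ Real.logb 2 ((n:ℝ)+1) := by
  obtain ⟨hn1, hn2⟩ := Finset.mem_Ioc.mp hn
  have hnge1 : 1 ≤ n := Nat.lt_of_le_of_lt (Nat.zero_le _) hn1
  have h2 : (2:ℝ) ≤ (n:ℝ) + 1 := by
    have : (1:ℝ) ≤ (n:ℝ) := by exact_mod_cast hnge1
    linarith
  have hb1 : (1:ℝ) ≤ Real.logb 2 ((n:ℝ)+1) := by
    calc (1:ℝ) = Real.logb 2 2 := (Real.logb_self_eq_one one_lt_two).symm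
      _ ≤ Real.logb 2 ((n:ℝ)+1) := Real.logb_le_logb_of_le one_lt_two (by norm_num) h2
  rw [max_le_iff]
  refine ⟨hb1, ?_⟩
  rcases Nat.eq_zero_or_pos j with hj | hj
  · subst hj; simp; linarith
  · have hpow : 2^(j-1) ≤ n := by
      have : 2^j/2 = 2^(j-1) := by
        conv_lhs => rw [show j = (j-1)+1 by omega]
        rw [pow_succ]; omega
      omega
    have hcast : ((2:ℝ))^(j-1) ≤ (n:ℝ)+1 := by
      have h' : ((2^(j-1):ℕ):ℝ) ≤ (n:ℝ) := by exact_mod_cast hpow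
      push_cast at h'
      linarith
    calc (j:ℝ) - 1 = ((j-1:ℕ):ℝ) := by
          rw [Nat.cast_sub hj]; norm_num
      _ = Real.logb 2 ((2:ℝ)^(j-1)) := by
          rw [Real.logb_pow, Real.logb_self_eq_one one_lt_two, mul_one]
      _ ≤ Real.logb 2 ((n:ℝ)+1) := Real.logb_le_logb_of_le one_lt_two (by positivity) hcast

lemma MR.memℒp_conj {Ω : Type*} [MeasurableSpace Ω] {P : Measure Ω} {f : Ω → ℂ}
    (hf : MemLp f 2 P) : MemLp (fun ω => (starRingEnd ℂ) (f ω)) 2 P :=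
  MemLp.of_le hf (RCLike.continuous_conj.comp_aestronglyMeasurable hf.1)
    (ae_of_all _ fun ω => by rw [RCLike.norm_conj])

lemma MR.integrable_mul_conj {Ω : Type*} [MeasurableSpace Ω] {P : Measure Ω} {f g : Ω → ℂ}
    (hf : MemLp f 2 P) (hg : MemLp g 2 P) :
    Integrable (fun ω => f ω * (starRingEnd ℂ) (g ω)) P := by
  have h := MemLp.smul (p := 2) (q := 2) (r := 1) (MR.memℒp_conj hg) hf
  rw [memLp_one_iff_integrable] at h
  exact h

lemma MR.block_bound {Ω : Type*} [MeasurableSpace Ω] {P : Measure Ω}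
    (a : ℕ → ℂ) (X : ℕ → Ω → ℂ) (s : Finset ℕ) (hX : ∀ n ∈ s, MemLp (X n) 2 P) :
    ∫⁻ ω, (ENNReal.ofReal ‖∑ n ∈ s, a n * X n ω‖) ^ 2 ∂P ≤
      ∑ n ∈ s, ∑ m ∈ s,
        ENNReal.ofReal (‖a n‖ * ‖a m‖ * ‖∫ ω, X n ω * (starRingEnd ℂ) (X m ω) ∂P‖) := by
  set D : Ω → ℂ := fun ω => ∑ n ∈ s, a n * X n ω with hD
  have hDmem : MemLp D 2 P :=
    memLp_finset_sum s fun n hn => (hX n hn).const_mul (a n)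
  have hDsq : Integrable (fun ω => ‖D ω‖ ^ 2) P :=
    (memLp_two_iff_integrable_sq_norm hDmem.1).mp hDmem
  have hDD : Integrable (fun ω => D ω * (starRingEnd ℂ) (D ω)) P :=
    MR.integrable_mul_conj hDmem hDmem
  have hint : ∀ n ∈ s, ∀ m ∈ s,
      Integrable (fun ω => X n ω * (starRingEnd ℂ) (X m ω)) P := fun n hn m hm =>
    MR.integrable_mul_conj (hX n hn) (hX m hm)
  -- step 1: lintegral to integral
  have h1 : ∫⁻ ω, (ENNReal.ofReal ‖D ω‖) ^ 2 ∂P = ENNReal.ofReal (∫ ω, ‖D ω‖ ^ 2 ∂P) := by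
    rw [ofReal_integral_eq_lintegral_ofReal hDsq (ae_of_all _ fun ω => by positivity)]
    congr 1
    ext ω
    rw [ENNReal.ofReal_pow (norm_nonneg _)]
  rw [h1]
  -- step 2: the real integral identity
  have hsqre : ∀ z : ℂ, ‖z‖ ^ 2 = RCLike.re (z * (starRingEnd ℂ) z) := fun z => by
    rw [Complex.mul_conj]
    rw [show RCLike.re ((Complex.normSq z : ℝ) : ℂ) = Complex.normSq z from Complex.ofReal_re _]
    rw [Complex.normSq_eq_norm_sq]
  have h2 : ∫ ω, ‖D ω‖ ^ 2 ∂P = RCLike.re (∫ ω, D ω * (starRingEnd ℂ) (D ω) ∂P) := by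
    rw [← integral_re hDD]
    exact integral_congr_ae (ae_of_all _ fun ω => hsqre (D ω))
  -- step 3: expand
  have hptwise : ∀ ω, D ω * (starRingEnd ℂ) (D ω) =
      ∑ n ∈ s, ∑ m ∈ s, (a n * (starRingEnd ℂ) (a m)) * (X n ω * (starRingEnd ℂ) (X m ω)) := by
    intro ω
    rw [hD]
    simp only [map_sum, Finset.sum_mul_sum, map_mul]
    refine Finset.sum_congr rfl fun n _ => Finset.sum_congr rfl fun m _ => by ring
  have h3 : ∫ ω, D ω * (starRingEnd ℂ) (D ω) ∂P =
      ∑ n ∈ s, ∑ m ∈ s, (a n * (starRingEnd ℂ) (a m)) *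
        ∫ ω, X n ω * (starRingEnd ℂ) (X m ω) ∂P := by
    rw [integral_congr_ae (ae_of_all _ hptwise), integral_finset_sum s fun n hn =>
      integrable_finset_sum s fun m hm => ((hint n hn m hm).const_mul _)]
    refine Finset.sum_congr rfl fun n hn => ?_
    rw [integral_finset_sum s fun m hm => ((hint n hn m hm).const_mul _)]
    exact Finset.sum_congr rfl fun m hm => by
      simpa [smul_eq_mul] using
        integral_smul (a n * (starRingEnd ℂ) (a m)) (fun ω => X n ω * (starRingEnd ℂ) (X m ω))
  -- step 4: bound
  rw [h2, h3]
  calc (ENNReal.ofReal (RCLike.re (∑ n ∈ s, ∑ m ∈ s, (a n * (starRingEnd ℂ) (a m)) *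
        ∫ ω, X n ω * (starRingEnd ℂ) (X m ω) ∂P)))
      ≤ ENNReal.ofReal (∑ n ∈ s, ∑ m ∈ s,
          ‖a n‖ * ‖a m‖ * ‖∫ ω, X n ω * (starRingEnd ℂ) (X m ω) ∂P‖) := by
        apply ENNReal.ofReal_le_ofReal
        calc RCLike.re (∑ n ∈ s, ∑ m ∈ s, (a n * (starRingEnd ℂ) (a m)) *
              ∫ ω, X n ω * (starRingEnd ℂ) (X m ω) ∂P)
            ≤ ‖∑ n ∈ s, ∑ m ∈ s, (a n * (starRingEnd ℂ) (a m)) *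
              ∫ ω, X n ω * (starRingEnd ℂ) (X m ω) ∂P‖ := RCLike.re_le_norm _
          _ ≤ ∑ n ∈ s, ∑ m ∈ s, ‖a n‖ * ‖a m‖ * ‖∫ ω, X n ω * (starRingEnd ℂ) (X m ω) ∂P‖ := by
              refine (norm_sum_le _ _).trans (Finset.sum_le_sum fun n _ => ?_)
              refine (norm_sum_le _ _).trans (Finset.sum_le_sum fun m _ => ?_)
              rw [norm_mul, norm_mul, RCLike.norm_conj]
    _ = ∑ n ∈ s, ∑ m ∈ s,
          ENNReal.ofReal (‖a n‖ * ‖a m‖ * ‖∫ ω, X n ω * (starRingEnd ℂ) (X m ω) ∂P‖) := by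
        rw [ENNReal.ofReal_sum_of_nonneg fun n _ => Finset.sum_nonneg fun m _ => by positivity]
        exact Finset.sum_congr rfl fun n _ =>
          ENNReal.ofReal_sum_of_nonneg fun m _ => by positivity


set_option maxHeartbeats 1000000 in
/-- Under the Menshov–Rademacher type condition `L < ∞`, the dyadic partial sums
`S_{2^k} = Σ_{n=1}^{2^k} a_n X_n` converge almost surely and
`E((sup_k |S_{2^k}|)²) ≤ 4 L`. -/
theorem dyadic_partial_sums_converge
    {Ω : Type*} [MeasurableSpace Ω] (P : Measure Ω) [IsProbabilityMeasure P]
    (a : ℕ → ℂ) (X : ℕ → Ω → ℂ)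
    (hmeas : ∀ n, 1 ≤ n → AEMeasurable (X n) P)
    (hnorm : ∀ n, 1 ≤ n → ∫ ω, ‖X n ω‖ ^ 2 ∂P = 1)
    (L : ℝ≥0∞)
    (hLdef : L = ∑' (n : ℕ+) (m : ℕ+),
      ENNReal.ofReal (‖a n‖ * ‖a m‖ * ‖∫ ω, X n ω * (starRingEnd ℂ) (X m ω) ∂P‖ *
        Real.logb 2 ((n : ℕ) + 1) * Real.logb 2 ((m : ℕ) + 1)))
    (hL : L < ⊤) :
    (∀ᵐ ω ∂P, ∃ l : ℂ,
        Tendsto (fun k : ℕ => ∑ n ∈ Finset.Icc 1 (2 ^ k), a n * X n ω) atTop (nhds l)) ∧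
      ∫⁻ ω, (⨆ k : ℕ, ENNReal.ofReal
          ‖∑ n ∈ Finset.Icc 1 (2 ^ k), a n * X n ω‖) ^ 2 ∂P ≤ 4 * L := by
  classical
  -- X n is in L²
  have hX2 : ∀ n, 1 ≤ n → MemLp (X n) 2 P := by
    intro n hn
    refine (memLp_two_iff_integrable_sq_norm (hmeas n hn).aestronglyMeasurable).mpr ?_
    by_contra hni
    exact one_ne_zero ((hnorm n hn).symm.trans (integral_undef hni))
  -- the blocks
  set blk : ℕ → Finset ℕ := fun j => Finset.Ioc (2^j/2) (2^j) with hblk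
  have hmem1 : ∀ j n, n ∈ blk j → 1 ≤ n := fun j n hn =>
    Nat.lt_of_le_of_lt (Nat.zero_le _) (Finset.mem_Ioc.mp hn).1
  set D : ℕ → Ω → ℂ := fun j ω => ∑ n ∈ blk j, a n * X n ω with hDdef
  set Fj : ℕ → Ω → ℝ≥0∞ := fun j ω => ENNReal.ofReal ‖D j ω‖ with hFjdef
  have hDmeas : ∀ j, AEStronglyMeasurable (D j) P := fun j =>
    Finset.aestronglyMeasurable_fun_sum _ fun n hn =>
      ((hmeas n (hmem1 j n hn)).aestronglyMeasurable).const_mul (a n)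
  have hFmeas : ∀ j, AEMeasurable (Fj j) P := fun j =>
    ENNReal.measurable_ofReal.comp_aemeasurable (hDmeas j).norm.aemeasurable
  -- partial sum identity
  have hS : ∀ (k : ℕ) (ω : Ω), ∑ n ∈ Finset.Icc 1 (2^k), a n * X n ω
      = ∑ j ∈ Finset.range (k+1), D j ω := by
    intro k ω
    rw [show Finset.Icc 1 (2^k) = Finset.Ioc 0 (2^k) from Finset.Icc_add_one_left_eq_Ioc 0 (2^k)]
    exact (MR.sum_blocks (fun n => a n * X n ω) k).symm
  -- weights
  set C : ℕ → ℝ≥0∞ := fun j => ENNReal.ofReal (max 1 ((j:ℝ)-1)) with hC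
  have hCge1 : ∀ j, 1 ≤ C j := fun j => by
    rw [hC]; simpa using ENNReal.ofReal_le_ofReal (le_max_left 1 ((j:ℝ)-1))
  have hCne0 : ∀ j, C j ≠ 0 := fun j => fun h => by
    simpa [h] using hCge1 j
  have hCnetop : ∀ j, C j ≠ ⊤ := fun j => ENNReal.ofReal_ne_top
  -- the summand of L
  set G : ℕ → ℕ → ℝ≥0∞ := fun n m =>
    ENNReal.ofReal (‖a n‖ * ‖a m‖ * ‖∫ ω, X n ω * (starRingEnd ℂ) (X m ω) ∂P‖ *
      Real.logb 2 ((n:ℝ) + 1) * Real.logb 2 ((m:ℝ) + 1)) with hG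
  set B : ℕ → ℝ≥0∞ := fun j => ∑ n ∈ blk j, ∑ m ∈ blk j,
    ENNReal.ofReal (‖a n‖ * ‖a m‖ * ‖∫ ω, X n ω * (starRingEnd ℂ) (X m ω) ∂P‖) with hB
  have hBj : ∀ j, ∫⁻ ω, (Fj j ω) ^ 2 ∂P ≤ B j := fun j =>
    MR.block_bound a X (blk j) fun n hn => hX2 n (hmem1 j n hn)
  -- weighted block bound
  have hCB : ∀ j, C j ^ 2 * B j ≤ ∑ n ∈ blk j, ∑ m ∈ blk j, G n m := by
    intro j
    rw [hB, Finset.mul_sum]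
    refine Finset.sum_le_sum fun n hn => ?_
    rw [Finset.mul_sum]
    refine Finset.sum_le_sum fun m hm => ?_
    have hcj : (0:ℝ) ≤ max 1 ((j:ℝ)-1) := le_trans zero_le_one (le_max_left _ _)
    have hln := MR.log_block_bound (j := j) (n := n) hn
    have hlm := MR.log_block_bound (j := j) (n := m) hm
    have hbase : (0:ℝ) ≤ ‖a n‖ * ‖a m‖ * ‖∫ ω, X n ω * (starRingEnd ℂ) (X m ω) ∂P‖ := by
      positivity
    rw [hC, sq, ← ENNReal.ofReal_mul hcj, ← ENNReal.ofReal_mul (by positivity)]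
    refine ENNReal.ofReal_le_ofReal ?_
    calc max 1 ((j:ℝ)-1) * max 1 ((j:ℝ)-1) *
          (‖a n‖ * ‖a m‖ * ‖∫ ω, X n ω * (starRingEnd ℂ) (X m ω) ∂P‖)
        ≤ Real.logb 2 ((n:ℝ)+1) * Real.logb 2 ((m:ℝ)+1) *
          (‖a n‖ * ‖a m‖ * ‖∫ ω, X n ω * (starRingEnd ℂ) (X m ω) ∂P‖) := by
          refine mul_le_mul_of_nonneg_right ?_ hbase
          exact mul_le_mul hln hlm hcj (le_trans hcj hln)
      _ = ‖a n‖ * ‖a m‖ * ‖∫ ω, X n ω * (starRingEnd ℂ) (X m ω) ∂P‖ *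
          Real.logb 2 ((n:ℝ)+1) * Real.logb 2 ((m:ℝ)+1) := by ring
  -- rewrite L as a double tsum over ℕ
  have hL' : L = ∑' (k : ℕ) (l : ℕ), G (k+1) (l+1) := by
    rw [hLdef]
    rw [← Equiv.tsum_eq Equiv.pnatEquivNat.symm]
    refine tsum_congr fun k => ?_
    rw [← Equiv.tsum_eq Equiv.pnatEquivNat.symm]
    refine tsum_congr fun l => ?_
    simp [hG, Equiv.pnatEquivNat, Nat.succPNat]
  -- finite double sums are below L
  have hsquare : ∀ N : ℕ, ∑ n ∈ Finset.Ioc 0 N, ∑ m ∈ Finset.Ioc 0 N, G n m ≤ L := by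
    intro N
    rw [hL']
    have hIoc : Finset.Ioc 0 N = Finset.Ico 1 (N+1) := by
      rw [Finset.Ico_add_one_right_eq_Icc]; exact (Finset.Icc_add_one_left_eq_Ioc 0 N).symm
    rw [hIoc]
    rw [Finset.sum_Ico_eq_sum_range]
    simp only [Nat.add_sub_cancel]
    calc ∑ i ∈ Finset.range N, ∑ m ∈ Finset.Ico 1 (N+1), G (1+i) m
        ≤ ∑ i ∈ Finset.range N, ∑' (l : ℕ), G (1+i) (l+1) := by
          refine Finset.sum_le_sum fun i _ => ?_
          rw [Finset.sum_Ico_eq_sum_range]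
          simp only [Nat.add_sub_cancel]
          calc ∑ l ∈ Finset.range N, G (1+i) (1+l)
              ≤ ∑' (l : ℕ), G (1+i) (1+l) := ENNReal.sum_le_tsum _
            _ = ∑' (l : ℕ), G (1+i) (l+1) := by
                refine tsum_congr fun l => by rw [add_comm 1 l]
      _ = ∑ i ∈ Finset.range N, ∑' (l : ℕ), G (i+1) (l+1) := by
          refine Finset.sum_congr rfl fun i _ => by rw [add_comm 1 i]
      _ ≤ ∑' (k : ℕ) (l : ℕ), G (k+1) (l+1) := ENNReal.sum_le_tsum _
  -- tsum over blocks of G is at most L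
  have hGL : ∑' j, (∑ n ∈ blk j, ∑ m ∈ blk j, G n m) ≤ L := by
    rw [ENNReal.tsum_eq_iSup_nat]
    refine iSup_le fun J => ?_
    cases J with
    | zero => simp
    | succ k =>
      calc ∑ j ∈ Finset.range (k+1), ∑ n ∈ blk j, ∑ m ∈ blk j, G n m
          ≤ ∑ j ∈ Finset.range (k+1), ∑ n ∈ blk j, ∑ m ∈ Finset.Ioc 0 (2^k), G n m := by
            refine Finset.sum_le_sum fun j hj => Finset.sum_le_sum fun n _ => ?_
            refine Finset.sum_le_sum_of_subset ?_
            refine Finset.Ioc_subset_Ioc (Nat.zero_le _) ?_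
            exact Nat.pow_le_pow_right (by norm_num)
              (Nat.lt_succ_iff.mp (Finset.mem_range.mp hj))
        _ = ∑ n ∈ Finset.Ioc 0 (2^k), ∑ m ∈ Finset.Ioc 0 (2^k), G n m :=
            MR.sum_blocks (fun n => ∑ m ∈ Finset.Ioc 0 (2^k), G n m) k
        _ ≤ L := hsquare (2^k)
  -- L² norms of the blocks
  set b : ℕ → ℝ≥0∞ := fun j => (∫⁻ ω, (Fj j ω) ^ 2 ∂P) ^ (1/2:ℝ) with hb
  have hCbB : ∑' j, (C j * b j) ^ 2 ≤ L := by
    refine le_trans ?_ hGL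
    refine ENNReal.tsum_le_tsum fun j => ?_
    rw [mul_pow, hb, MR.rpow_half_sq]
    exact le_trans (mul_le_mul_right (hBj j) _) (hCB j)
  have hsum_b : ∑' j, b j ≤ 2 * L ^ (1/2:ℝ) := by
    have hbj : ∀ j, b j = (C j)⁻¹ * (C j * b j) := fun j => by
      rw [← mul_assoc, ENNReal.inv_mul_cancel (hCne0 j) (hCnetop j), one_mul]
    calc ∑' j, b j = ∑' j, (C j)⁻¹ * (C j * b j) := tsum_congr hbj
      _ ≤ (∑' j, ((C j)⁻¹) ^ 2) ^ (1/2:ℝ) * (∑' j, (C j * b j) ^ 2) ^ (1/2:ℝ) :=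
          MR.enn_CS _ _
      _ ≤ (4 : ℝ≥0∞) ^ (1/2:ℝ) * L ^ (1/2:ℝ) :=
          mul_le_mul' (ENNReal.rpow_le_rpow MR.tsum_weights (by norm_num))
            (ENNReal.rpow_le_rpow hCbB (by norm_num))
      _ = 2 * L ^ (1/2:ℝ) := by
          congr 1
          rw [show (4:ℝ≥0∞) = 2^(2:ℕ) by norm_num, ← ENNReal.rpow_natCast 2 2,
            ← ENNReal.rpow_mul]
          norm_num
  -- the maximal bound
  have hmain : ∫⁻ ω, (∑' j, Fj j ω) ^ 2 ∂P ≤ 4 * L := by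
    calc ∫⁻ ω, (∑' j, Fj j ω) ^ 2 ∂P
        ≤ (∑' j, (∫⁻ ω, (Fj j ω) ^ 2 ∂P) ^ (1/2:ℝ)) ^ 2 :=
          MR.lintegral_tsum_sq_le Fj hFmeas
      _ ≤ (2 * L ^ (1/2:ℝ)) ^ 2 := pow_le_pow_left' hsum_b 2
      _ = 4 * L := by
          rw [mul_pow, MR.rpow_half_sq]
          norm_num
  have hdom : ∀ ω, (⨆ k : ℕ, ENNReal.ofReal
      ‖∑ n ∈ Finset.Icc 1 (2 ^ k), a n * X n ω‖) ^ 2 ≤ (∑' j, Fj j ω) ^ 2 := by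
    intro ω
    refine pow_le_pow_left' (iSup_le fun k => ?_) 2
    rw [hS k ω]
    calc ENNReal.ofReal ‖∑ j ∈ Finset.range (k+1), D j ω‖
        ≤ ENNReal.ofReal (∑ j ∈ Finset.range (k+1), ‖D j ω‖) :=
          ENNReal.ofReal_le_ofReal (norm_sum_le _ _)
      _ = ∑ j ∈ Finset.range (k+1), ENNReal.ofReal ‖D j ω‖ :=
          ENNReal.ofReal_sum_of_nonneg fun j _ => norm_nonneg _
      _ ≤ ∑' j, Fj j ω := ENNReal.sum_le_tsum _
  constructor
  · -- a.s. convergence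
    have hTmeas : AEMeasurable (fun ω => (∑' j, Fj j ω) ^ 2) P :=
      (AEMeasurable.ennreal_tsum hFmeas).pow_const 2
    have hfin : ∀ᵐ ω ∂P, (∑' j, Fj j ω) ^ 2 < ⊤ := by
      refine ae_lt_top' hTmeas (ne_of_lt (lt_of_le_of_lt hmain ?_))
      exact ENNReal.mul_lt_top (by norm_num) hL
    filter_upwards [hfin] with ω hω
    have hne : (∑' j, Fj j ω) ≠ ⊤ := by
      intro he
      rw [he, ENNReal.top_pow (by norm_num : 2 ≠ 0)] at hω
      exact lt_irrefl _ hω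
    have hsummable : Summable fun j => ‖D j ω‖ := by
      have := ENNReal.summable_toReal hne
      refine Summable.congr this fun j => ?_
      rw [hFjdef]
      exact ENNReal.toReal_ofReal (norm_nonneg _)
    have hsum : Summable fun j => D j ω := Summable.of_norm hsummable
    obtain ⟨l, hl⟩ := hsum
    refine ⟨l, ?_⟩
    have h1 : Tendsto (fun J => ∑ j ∈ Finset.range J, D j ω) atTop (nhds l) :=
      hl.tendsto_sum_nat
    have h2 : Tendsto (fun k : ℕ => ∑ j ∈ Finset.range (k+1), D j ω) atTop (nhds l) :=
      h1.comp (tendsto_add_atTop_nat 1)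
    refine Tendsto.congr (fun k => (hS k ω).symm) h2
  · exact le_trans (lintegral_mono hdom) hmain
end

section
/- Let (a_n)_{n≥1} be a sequence of complex numbers and (X_n)_{n≥1} a sequence of complex-valued random variables with E(|X_n|²) = 1 for all n, and assume L := Σ_{n,m=1}^∞ |a_n| |a_m| |E(X_n · conj(X_m))| · log₂(n+1) · log₂(m+1) < ∞. For k = 0, 1, 2, … define the block maxima S°_k = max_{2^k ≤ j < 2^{k+1}} |Σ_{n=2^k}^j a_n X_n|. Then Σ_{k=0}^∞ E( (S°_k)² ) ≤ 4 L, and consequently S°_k → 0 almost surely as k → ∞. -/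
open MeasureTheory Filter
open scoped ENNReal

set_option linter.unusedSectionVars false
set_option maxHeartbeats 1000000

namespace MRaux

variable {Ω : Type*} [MeasurableSpace Ω] (P : Measure Ω) [IsProbabilityMeasure P]
variable (a : ℕ → ℂ) (X : ℕ → Ω → ℂ)

/-- squared norm of the block sum over `[b, e)`. -/
noncomputable def g (a : ℕ → ℂ) (X : ℕ → Ω → ℂ) (b e : ℕ) (ω : Ω) : ℝ :=
  ‖∑ n ∈ Finset.Ico b e, a n * X n ω‖ ^ 2

/-- recursive dyadic variance-like quantity. -/
noncomputable def V (a : ℕ → ℂ) (X : ℕ → Ω → ℂ) : ℕ → ℕ → Ω → ℝ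
  | 0, b => g a X b (b + 1)
  | (k + 1), b => fun ω =>
      g a X b (b + 2 ^ (k + 1)) ω + V a X k b ω + V a X k (b + 2 ^ k) ω

/-- the covariance-type weight. -/
noncomputable def c (P : Measure Ω) (a : ℕ → ℂ) (X : ℕ → Ω → ℂ) (n m : ℕ) : ℝ≥0∞ :=
  ENNReal.ofReal (‖a n‖ * ‖a m‖ * ‖∫ ω, X n ω * (starRingEnd ℂ) (X m ω) ∂P‖)

noncomputable def C (P : Measure Ω) (a : ℕ → ℂ) (X : ℕ → Ω → ℂ) (b e : ℕ) : ℝ≥0∞ :=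
  ∑ p ∈ Finset.Ico b e ×ˢ Finset.Ico b e, c P a X p.1 p.2

/-- the log-weighted summand. -/
noncomputable def w (P : Measure Ω) (a : ℕ → ℂ) (X : ℕ → Ω → ℂ) (n m : ℕ) : ℝ≥0∞ :=
  ENNReal.ofReal (‖a n‖ * ‖a m‖ * ‖∫ ω, X n ω * (starRingEnd ℂ) (X m ω) ∂P‖ *
    Real.logb 2 ((n : ℝ) + 1) * Real.logb 2 ((m : ℝ) + 1))

lemma g_nonneg (b e : ℕ) (ω : Ω) : 0 ≤ g a X b e ω := by
  unfold g; positivity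

lemma V_nonneg (k : ℕ) : ∀ b ω, 0 ≤ V a X k b ω := by
  induction k with
  | zero => intro b ω; exact g_nonneg a X b (b + 1) ω
  | succ k ih =>
      intro b ω
      have := g_nonneg a X b (b + 2 ^ (k + 1)) ω
      have h1 := ih b ω
      have h2 := ih (b + 2 ^ k) ω
      simp only [V]; linarith

lemma g_le_V (k b : ℕ) (ω : Ω) :
    g a X b (b + 2 ^ k) ω ≤ V a X k b ω := by
  cases k with
  | zero => simp [V]
  | succ k =>
      have h1 := V_nonneg a X k b ω
      have h2 := V_nonneg a X k (b + 2 ^ k) ω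
      simp only [V]; linarith

lemma key_quad (k : ℕ) (x y P Q : ℝ) (hx0 : 0 ≤ x) (hy0 : 0 ≤ y) (hQ : 0 ≤ Q)
    (hxP : x ^ 2 ≤ P) (hyQ : y ^ 2 ≤ ((k : ℝ) + 1) * Q) :
    (x + y) ^ 2 ≤ ((k : ℝ) + 2) * (P + Q) := by
  have hk : (0 : ℝ) ≤ (k : ℝ) := Nat.cast_nonneg k
  nlinarith [sq_nonneg (((k : ℝ) + 1) * x - y), sq_nonneg x, sq_nonneg y,
    mul_nonneg hk hQ, mul_nonneg hk (sq_nonneg x), mul_nonneg hk hx0,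
    mul_nonneg (mul_nonneg hk hk) hQ]

/-- the pointwise Menshov–Rademacher bound. -/
lemma pointwise (k : ℕ) :
    ∀ b j, j ∈ Finset.Ico b (b + 2 ^ k) → ∀ ω,
      ‖∑ n ∈ Finset.Icc b j, a n * X n ω‖ ^ 2 ≤ ((k : ℝ) + 1) * V a X k b ω := by
  induction k with
  | zero =>
      intro b j hj ω
      rw [Finset.mem_Ico] at hj
      have hjb : j = b := by omega
      subst hjb
      have : Finset.Icc j j = Finset.Ico j (j + 1) := by
        rw [Finset.Ico_add_one_right_eq_Icc]
      rw [this]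
      simp only [V, Nat.cast_zero]
      rw [g]
      norm_num
  | succ k ih =>
      intro b j hj ω
      rw [Finset.mem_Ico] at hj
      have hVk := V_nonneg a X k b ω
      have hVk2 := V_nonneg a X k (b + 2 ^ k) ω
      have hg := g_nonneg a X b (b + 2 ^ (k + 1)) ω
      have hsplit2 : b + 2 ^ (k + 1) = (b + 2 ^ k) + 2 ^ k := by
        rw [pow_succ, mul_two]; omega
      by_cases hlt : j < b + 2 ^ k
      · have h1 := ih b j (Finset.mem_Ico.mpr ⟨hj.1, hlt⟩) ω
        have hV : V a X k b ω ≤ V a X (k + 1) b ω := by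
          simp only [V]; linarith
        have hc : ((k : ℝ) + 1) ≤ ((k + 1 : ℕ) : ℝ) + 1 := by push_cast; linarith
        calc ‖∑ n ∈ Finset.Icc b j, a n * X n ω‖ ^ 2
            ≤ ((k : ℝ) + 1) * V a X k b ω := h1
          _ ≤ (((k + 1 : ℕ) : ℝ) + 1) * V a X (k + 1) b ω := by
              have h0 : (0:ℝ) ≤ (k:ℝ) + 1 := by positivity
              have := mul_le_mul hc hV hVk (by positivity)
              linarith [this]
      · push_neg at hlt
        have hIcc : Finset.Icc b j = Finset.Ico b (j + 1) := (Finset.Ico_add_one_right_eq_Icc b j).symm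
        have hsum : ∑ n ∈ Finset.Ico b (j + 1), a n * X n ω
            = (∑ n ∈ Finset.Ico b (b + 2 ^ k), a n * X n ω)
              + ∑ n ∈ Finset.Ico (b + 2 ^ k) (j + 1), a n * X n ω := by
          rw [Finset.sum_Ico_consecutive]
          · omega
          · omega
        set A := ∑ n ∈ Finset.Ico b (b + 2 ^ k), a n * X n ω with hA
        set B := ∑ n ∈ Finset.Ico (b + 2 ^ k) (j + 1), a n * X n ω with hB
        have hxP : ‖A‖ ^ 2 ≤ V a X k b ω := g_le_V a X k b ω
        have hyQ : ‖B‖ ^ 2 ≤ ((k : ℝ) + 1) * V a X k (b + 2 ^ k) ω := by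
          have hmem : j ∈ Finset.Ico (b + 2 ^ k) ((b + 2 ^ k) + 2 ^ k) :=
            Finset.mem_Ico.mpr ⟨hlt, by omega⟩
          have := ih (b + 2 ^ k) j hmem ω
          rwa [show Finset.Icc (b + 2 ^ k) j = Finset.Ico (b + 2 ^ k) (j + 1) from
            (Finset.Ico_add_one_right_eq_Icc _ j).symm] at this
        have hnorm : ‖∑ n ∈ Finset.Icc b j, a n * X n ω‖ ≤ ‖A‖ + ‖B‖ := by
          rw [hIcc, hsum]; exact norm_add_le A B
        have hsq : ‖∑ n ∈ Finset.Icc b j, a n * X n ω‖ ^ 2 ≤ (‖A‖ + ‖B‖) ^ 2 := by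
          have h0 : (0:ℝ) ≤ ‖∑ n ∈ Finset.Icc b j, a n * X n ω‖ := norm_nonneg _
          nlinarith [norm_nonneg A, norm_nonneg B]
        have hkey := key_quad k ‖A‖ ‖B‖ (V a X k b ω) (V a X k (b + 2 ^ k) ω)
          (norm_nonneg A) (norm_nonneg B) hVk2 hxP hyQ
        have hfin : ((k : ℝ) + 2) * (V a X k b ω + V a X k (b + 2 ^ k) ω)
            ≤ (((k + 1 : ℕ) : ℝ) + 1) * V a X (k + 1) b ω := by
          simp only [V]
          push_cast
          nlinarith [hg]
        linarith

lemma memL2 (hmeas : ∀ n, 1 ≤ n → AEMeasurable (X n) P)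
    (hnorm : ∀ n, 1 ≤ n → ∫ ω, ‖X n ω‖ ^ 2 ∂P = 1) {n : ℕ} (hn : 1 ≤ n) :
    MemLp (X n) 2 P := by
  have hasm : AEStronglyMeasurable (X n) P := (hmeas n hn).aestronglyMeasurable
  rw [memLp_two_iff_integrable_sq_norm hasm]
  by_contra h
  have h1 := hnorm n hn
  rw [integral_undef h] at h1
  exact one_ne_zero h1.symm

lemma integrable_mul_conj {f h : Ω → ℂ} (hf : MemLp f 2 P) (hg : MemLp h 2 P) :
    Integrable (fun ω => f ω * (starRingEnd ℂ) (h ω)) P := by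
  have hgc : MemLp (fun ω => (starRingEnd ℂ) (h ω)) 2 P := by
    refine hg.of_le (RCLike.continuous_conj.comp_aestronglyMeasurable hg.1) ?_
    exact Filter.Eventually.of_forall fun ω => by simp [RCLike.norm_conj]
  have hpqr : (1 : ℝ≥0∞) / 1 = 1 / 2 + 1 / 2 := by
    rw [ENNReal.div_add_div_same, one_div_one]
    norm_num
    exact (ENNReal.div_self (by norm_num) (by norm_num)).symm
  have h2 := hgc.smul (φ := f) hf (hpqr := ⟨by rw [ENNReal.inv_two_add_inv_two, inv_one]⟩)
  rw [← memLp_one_iff_integrable]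
  exact h2

/-- Lemma A: second moment of a block sum. -/
lemma blockE (hmeas : ∀ n, 1 ≤ n → AEMeasurable (X n) P)
    (hnorm : ∀ n, 1 ≤ n → ∫ ω, ‖X n ω‖ ^ 2 ∂P = 1) {b e : ℕ} (hb : 1 ≤ b) :
    ∫⁻ ω, ENNReal.ofReal (g a X b e ω) ∂P ≤
      ∑ n ∈ Finset.Ico b e, ∑ m ∈ Finset.Ico b e, c P a X n m := by
  have hX2 : ∀ n ∈ Finset.Ico b e, MemLp (X n) 2 P := fun n hn =>
    memL2 P X hmeas hnorm (le_trans hb (Finset.mem_Ico.mp hn).1)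
  have hY2 : ∀ n ∈ Finset.Ico b e, MemLp (fun ω => a n * X n ω) 2 P := fun n hn =>
    (hX2 n hn).const_mul (a n)
  have hΔ : MemLp (fun ω => ∑ n ∈ Finset.Ico b e, a n * X n ω) 2 P :=
    memLp_finsetSum _ hY2
  have hgInt : Integrable (g a X b e) P := by
    have := (memLp_two_iff_integrable_sq_norm hΔ.1).mp hΔ
    exact this
  rw [← ofReal_integral_eq_lintegral_ofReal hgInt
      (Filter.Eventually.of_forall fun ω => by unfold g; positivity)]
  have hint_nm : ∀ n ∈ Finset.Ico b e, ∀ m ∈ Finset.Ico b e,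
      Integrable (fun ω => (a n * X n ω) * (starRingEnd ℂ) (a m * X m ω)) P := by
    intro n hn m hm
    have h0 : Integrable (fun ω => X n ω * (starRingEnd ℂ) (X m ω)) P :=
      integrable_mul_conj P (hX2 n hn) (hX2 m hm)
    have := (h0.const_mul (a n * (starRingEnd ℂ) (a m)))
    refine this.congr (Filter.Eventually.of_forall fun ω => ?_)
    simp only [map_mul]
    ring
  have hexp : (∫ ω, g a X b e ω ∂P : ℝ)
      = ‖∑ n ∈ Finset.Ico b e, ∑ m ∈ Finset.Ico b e,
          (a n * (starRingEnd ℂ) (a m)) * ∫ ω, X n ω * (starRingEnd ℂ) (X m ω) ∂P‖ := by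
    have h1 : ((∫ ω, g a X b e ω ∂P : ℝ) : ℂ)
        = ∫ ω, ((g a X b e ω : ℝ) : ℂ) ∂P := (integral_ofReal).symm
    have h2 : ∀ ω, ((g a X b e ω : ℝ) : ℂ)
        = (∑ n ∈ Finset.Ico b e, a n * X n ω)
          * (starRingEnd ℂ) (∑ n ∈ Finset.Ico b e, a n * X n ω) := by
      intro ω
      rw [RCLike.mul_conj]
      unfold g
      push_cast
      norm_num
    have h3 : ∫ ω, ((g a X b e ω : ℝ) : ℂ) ∂P
        = ∑ n ∈ Finset.Ico b e, ∑ m ∈ Finset.Ico b e,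
            (a n * (starRingEnd ℂ) (a m)) * ∫ ω, X n ω * (starRingEnd ℂ) (X m ω) ∂P := by
      rw [integral_congr_ae (Filter.Eventually.of_forall h2)]
      have h4 : ∀ ω, (∑ n ∈ Finset.Ico b e, a n * X n ω)
          * (starRingEnd ℂ) (∑ n ∈ Finset.Ico b e, a n * X n ω)
          = ∑ n ∈ Finset.Ico b e, ∑ m ∈ Finset.Ico b e,
              (a n * X n ω) * (starRingEnd ℂ) (a m * X m ω) := by
        intro ω
        rw [map_sum, Finset.sum_mul_sum]
      rw [integral_congr_ae (Filter.Eventually.of_forall h4)]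
      rw [integral_finset_sum _
        (fun n hn => integrable_finset_sum _ (fun m hm => hint_nm n hn m hm))]
      refine Finset.sum_congr rfl fun n hn => ?_
      rw [integral_finset_sum _ (fun m hm => hint_nm n hn m hm)]
      refine Finset.sum_congr rfl fun m hm => ?_
      rw [← integral_const_mul]
      refine integral_congr_ae (Filter.Eventually.of_forall fun ω => ?_)
      simp only [map_mul]
      ring
    have h5 : (0:ℝ) ≤ ∫ ω, g a X b e ω ∂P :=
      integral_nonneg fun ω => by unfold g; positivity
    calc (∫ ω, g a X b e ω ∂P : ℝ) = ‖((∫ ω, g a X b e ω ∂P : ℝ) : ℂ)‖ := by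
          rw [Complex.norm_real]; exact (abs_of_nonneg h5).symm
      _ = ‖∑ n ∈ Finset.Ico b e, ∑ m ∈ Finset.Ico b e,
            (a n * (starRingEnd ℂ) (a m)) * ∫ ω, X n ω * (starRingEnd ℂ) (X m ω) ∂P‖ := by
          rw [h1, h3]
  rw [hexp]
  have hnorm_le : ‖∑ n ∈ Finset.Ico b e, ∑ m ∈ Finset.Ico b e,
        (a n * (starRingEnd ℂ) (a m)) * ∫ ω, X n ω * (starRingEnd ℂ) (X m ω) ∂P‖
      ≤ ∑ n ∈ Finset.Ico b e, ∑ m ∈ Finset.Ico b e,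
          ‖a n‖ * ‖a m‖ * ‖∫ ω, X n ω * (starRingEnd ℂ) (X m ω) ∂P‖ := by
    refine le_trans (norm_sum_le _ _) (Finset.sum_le_sum fun n hn => ?_)
    refine le_trans (norm_sum_le _ _) (Finset.sum_le_sum fun m hm => ?_)
    rw [norm_mul, norm_mul, RCLike.norm_conj]
  calc ENNReal.ofReal ‖∑ n ∈ Finset.Ico b e, ∑ m ∈ Finset.Ico b e,
        (a n * (starRingEnd ℂ) (a m)) * ∫ ω, X n ω * (starRingEnd ℂ) (X m ω) ∂P‖
      ≤ ENNReal.ofReal (∑ n ∈ Finset.Ico b e, ∑ m ∈ Finset.Ico b e,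
          ‖a n‖ * ‖a m‖ * ‖∫ ω, X n ω * (starRingEnd ℂ) (X m ω) ∂P‖) :=
        ENNReal.ofReal_le_ofReal hnorm_le
    _ ≤ _ := by
        rw [ENNReal.ofReal_sum_of_nonneg
          (fun n hn => Finset.sum_nonneg fun m hm => by positivity)]
        refine Finset.sum_le_sum fun n hn => ?_
        rw [ENNReal.ofReal_sum_of_nonneg (fun m hm => by positivity)]
        exact le_of_eq (Finset.sum_congr rfl fun m _ => rfl)

lemma aemeas_sum (hmeas : ∀ n, 1 ≤ n → AEMeasurable (X n) P) (s : Finset ℕ)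
    (hs : ∀ n ∈ s, 1 ≤ n) :
    AEMeasurable (fun ω => ∑ n ∈ s, a n * X n ω) P :=
  Finset.aemeasurable_fun_sum s fun n hn => (hmeas n (hs n hn)).const_mul (a n)

lemma aemeas_g (hmeas : ∀ n, 1 ≤ n → AEMeasurable (X n) P) {b : ℕ} (e : ℕ) (hb : 1 ≤ b) :
    AEMeasurable (g a X b e) P := by
  have h := aemeas_sum P a X hmeas (Finset.Ico b e)
    (fun n hn => le_trans hb (Finset.mem_Ico.mp hn).1)
  exact (h.norm.pow_const 2)

lemma aemeas_V (hmeas : ∀ n, 1 ≤ n → AEMeasurable (X n) P) (k : ℕ) :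
    ∀ b, 1 ≤ b → AEMeasurable (V a X k b) P := by
  induction k with
  | zero => intro b hb; exact aemeas_g P a X hmeas (b + 1) hb
  | succ k ih =>
      intro b hb
      have h1 := aemeas_g P a X hmeas (b + 2 ^ (k + 1)) hb
      have h2 := ih b hb
      have h3 := ih (b + 2 ^ k) (le_trans hb (Nat.le_add_right _ _))
      exact (h1.add h2).add h3

lemma C_eq (b e : ℕ) : C P a X b e
    = ∑ n ∈ Finset.Ico b e, ∑ m ∈ Finset.Ico b e, c P a X n m := by
  rw [C, Finset.sum_product]

lemma C_add_le {b m e : ℕ} (h1 : b ≤ m) (h2 : m ≤ e) :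
    C P a X b m + C P a X m e ≤ C P a X b e := by
  unfold C
  have hdisj : Disjoint (Finset.Ico b m ×ˢ Finset.Ico b m)
      (Finset.Ico m e ×ˢ Finset.Ico m e) := by
    refine Finset.disjoint_left.mpr fun p hp hp' => ?_
    rw [Finset.mem_product, Finset.mem_Ico, Finset.mem_Ico] at hp hp'
    omega
  rw [← Finset.sum_union hdisj]
  refine Finset.sum_le_sum_of_subset ?_
  refine Finset.union_subset ?_ ?_ <;>
    · refine Finset.product_subset_product ?_ ?_ <;>
        exact Finset.Ico_subset_Ico (by omega) (by omega)

lemma lintV (hmeas : ∀ n, 1 ≤ n → AEMeasurable (X n) P)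
    (hnorm : ∀ n, 1 ≤ n → ∫ ω, ‖X n ω‖ ^ 2 ∂P = 1) (k : ℕ) :
    ∀ b, 1 ≤ b → ∫⁻ ω, ENNReal.ofReal (V a X k b ω) ∂P
      ≤ ((k : ℝ≥0∞) + 1) * C P a X b (b + 2 ^ k) := by
  induction k with
  | zero =>
      intro b hb
      have h := blockE P a X hmeas hnorm (b := b) (e := b + 1) hb
      rw [← C_eq P a X b (b + 1)] at h
      simpa [V] using h
  | succ k ih =>
      intro b hb
      have hb2 : 1 ≤ b + 2 ^ k := le_trans hb (Nat.le_add_right _ _)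
      have hsplit : b + 2 ^ k + 2 ^ k = b + 2 ^ (k + 1) := by
        rw [pow_succ, mul_two, ← add_assoc]
      have hpt : ∀ ω, ENNReal.ofReal (V a X (k + 1) b ω)
          = ENNReal.ofReal (g a X b (b + 2 ^ (k + 1)) ω)
            + ENNReal.ofReal (V a X k b ω) + ENNReal.ofReal (V a X k (b + 2 ^ k) ω) := by
        intro ω
        simp only [V]
        rw [ENNReal.ofReal_add
            (add_nonneg (g_nonneg a X _ _ ω) (V_nonneg a X k b ω)) (V_nonneg a X k _ ω),
          ENNReal.ofReal_add (g_nonneg a X _ _ ω) (V_nonneg a X k b ω)]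
      have haemg : AEMeasurable (fun ω => ENNReal.ofReal (g a X b (b + 2 ^ (k + 1)) ω)) P :=
        ENNReal.measurable_ofReal.comp_aemeasurable (aemeas_g P a X hmeas _ hb)
      have haemV : AEMeasurable (fun ω => ENNReal.ofReal (V a X k b ω)) P :=
        ENNReal.measurable_ofReal.comp_aemeasurable (aemeas_V P a X hmeas k b hb)
      have hlin : ∫⁻ ω, ENNReal.ofReal (V a X (k + 1) b ω) ∂P
          = (∫⁻ ω, ENNReal.ofReal (g a X b (b + 2 ^ (k + 1)) ω) ∂P)
            + (∫⁻ ω, ENNReal.ofReal (V a X k b ω) ∂P)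
            + (∫⁻ ω, ENNReal.ofReal (V a X k (b + 2 ^ k) ω) ∂P) := by
        rw [lintegral_congr hpt, lintegral_add_left' (by exact haemg.add haemV : AEMeasurable (fun ω => ENNReal.ofReal (g a X b (b + 2 ^ (k + 1)) ω) + ENNReal.ofReal (V a X k b ω)) P),
          lintegral_add_left' haemg]
      have h1 : ∫⁻ ω, ENNReal.ofReal (g a X b (b + 2 ^ (k + 1)) ω) ∂P
          ≤ C P a X b (b + 2 ^ (k + 1)) := by
        rw [C_eq]; exact blockE P a X hmeas hnorm hb
      have h2 := ih b hb
      have h3 : ∫⁻ ω, ENNReal.ofReal (V a X k (b + 2 ^ k) ω) ∂P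
          ≤ ((k : ℝ≥0∞) + 1) * C P a X (b + 2 ^ k) (b + 2 ^ (k + 1)) := by
        have := ih (b + 2 ^ k) hb2
        rwa [hsplit] at this
      have he : b + 2 ^ k ≤ b + 2 ^ (k + 1) := by
        rw [← hsplit]; exact Nat.le_add_right _ _
      have hC := C_add_le P a X (Nat.le_add_right b (2 ^ k)) he
      set A := C P a X b (b + 2 ^ (k + 1))
      set C1 := C P a X b (b + 2 ^ k)
      set C2 := C P a X (b + 2 ^ k) (b + 2 ^ (k + 1))
      calc ∫⁻ ω, ENNReal.ofReal (V a X (k + 1) b ω) ∂P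
          ≤ A + (((k : ℝ≥0∞) + 1) * C1 + ((k : ℝ≥0∞) + 1) * C2) := by
            rw [hlin, add_assoc]
            exact add_le_add h1 (add_le_add h2 h3)
        _ = A + ((k : ℝ≥0∞) + 1) * (C1 + C2) := by rw [mul_add]
        _ ≤ A + ((k : ℝ≥0∞) + 1) * A := add_le_add_right (mul_le_mul_right hC _) A
        _ = (((k + 1 : ℕ) : ℝ≥0∞) + 1) * A := by push_cast; ring

lemma logb_ge (k n : ℕ) (h1 : 1 ≤ n) (h2 : 2 ^ k ≤ n) :
    (k : ℝ) ≤ Real.logb 2 ((n : ℝ) + 1) ∧ (1 : ℝ) ≤ Real.logb 2 ((n : ℝ) + 1) := by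
  have hb : (1 : ℝ) < 2 := one_lt_two
  constructor
  · have hpow : (2 : ℝ) ^ k ≤ (n : ℝ) + 1 := by
      have : ((2 ^ k : ℕ) : ℝ) ≤ (n : ℝ) := Nat.cast_le.mpr h2
      push_cast at this ⊢
      linarith
    have := Real.logb_le_logb_of_le hb (by positivity) hpow
    rwa [Real.logb_pow, Real.logb_self_eq_one hb, mul_one] at this
  · have h2n : (2 : ℝ) ≤ (n : ℝ) + 1 := by
      have : (1 : ℝ) ≤ (n : ℝ) := by exact_mod_cast h1
      linarith
    have := Real.logb_le_logb_of_le hb (by norm_num) h2n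
    rwa [Real.logb_self_eq_one hb] at this

lemma key_real (k : ℕ) (A B cr : ℝ) (hcr : 0 ≤ cr)
    (hAk : (k : ℝ) ≤ A) (hA1 : (1 : ℝ) ≤ A) (hBk : (k : ℝ) ≤ B) (hB1 : (1 : ℝ) ≤ B) :
    ((k : ℝ) + 1) ^ 2 * cr ≤ 4 * (cr * A * B) := by
  have hk : (0 : ℝ) ≤ (k : ℝ) := Nat.cast_nonneg k
  have h1 : (k : ℝ) * (k : ℝ) ≤ A * B :=
    mul_le_mul hAk hBk hk (by linarith)
  have h2 : (k : ℝ) * 1 ≤ A * B := mul_le_mul hAk hB1 zero_le_one (by linarith)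
  have h3 : (1 : ℝ) ≤ A * B := one_le_mul_of_one_le_of_one_le hA1 hB1
  have h4 : ((k : ℝ) + 1) ^ 2 ≤ 4 * (A * B) := by nlinarith
  calc ((k : ℝ) + 1) ^ 2 * cr ≤ 4 * (A * B) * cr :=
        mul_le_mul_of_nonneg_right h4 hcr
    _ = 4 * (cr * A * B) := by ring

lemma ofReal_kcast (k : ℕ) : ENNReal.ofReal ((k : ℝ) + 1) = (k : ℝ≥0∞) + 1 := by
  rw [show ((k : ℝ) + 1) = (((k + 1 : ℕ)) : ℝ) by push_cast; ring, ENNReal.ofReal_natCast]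
  push_cast; ring

lemma keyENN (k n m : ℕ) (hn : n ∈ Finset.Ico (2 ^ k) (2 ^ (k + 1)))
    (hm : m ∈ Finset.Ico (2 ^ k) (2 ^ (k + 1))) :
    ((k : ℝ≥0∞) + 1) ^ 2 * c P a X n m ≤ 4 * w P a X n m := by
  have h2k : 1 ≤ 2 ^ k := Nat.one_le_two_pow
  have hn' := Finset.mem_Ico.mp hn
  have hm' := Finset.mem_Ico.mp hm
  obtain ⟨hAk, hA1⟩ := logb_ge k n (le_trans h2k hn'.1) hn'.1
  obtain ⟨hBk, hB1⟩ := logb_ge k m (le_trans h2k hm'.1) hm'.1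
  set cr : ℝ := ‖a n‖ * ‖a m‖ * ‖∫ ω, X n ω * (starRingEnd ℂ) (X m ω) ∂P‖ with hcr_def
  have hcr : 0 ≤ cr := by rw [hcr_def]; positivity
  have hreal := key_real k _ _ cr hcr hAk hA1 hBk hB1
  have hL : ((k : ℝ≥0∞) + 1) ^ 2 * c P a X n m
      = ENNReal.ofReal (((k : ℝ) + 1) ^ 2 * cr) := by
    rw [ENNReal.ofReal_mul (by positivity), ENNReal.ofReal_pow (by positivity),
      ofReal_kcast]
    rfl
  have hR : (4 : ℝ≥0∞) * w P a X n m
      = ENNReal.ofReal (4 * (cr * Real.logb 2 ((n : ℝ) + 1) * Real.logb 2 ((m : ℝ) + 1))) := by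
    rw [ENNReal.ofReal_mul (by norm_num)]
    norm_num
    rfl
  rw [hL, hR]
  exact ENNReal.ofReal_le_ofReal hreal

lemma aemeasurable_sup'_aux {Ω : Type*} [MeasurableSpace Ω] {P : Measure Ω}
    {ι : Type*} {s : Finset ι} (hs : s.Nonempty) {f : ι → Ω → ℝ}
    (hf : ∀ i ∈ s, AEMeasurable (f i) P) :
    AEMeasurable (fun ω => s.sup' hs (fun i => f i ω)) P := by
  induction hs using Finset.Nonempty.cons_induction with
  | singleton i => simpa using hf i (by simp)
  | cons i s hi hs ih =>
      have hrw : ∀ ω, (Finset.cons i s hi).sup' (Finset.cons_nonempty hi) (fun j => f j ω)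
          = f i ω ⊔ (s.sup' hs fun j => f j ω) := fun ω => Finset.sup'_cons hs (fun j => f j ω)
      simp only [hrw]
      exact (hf i (by simp)).max (ih fun j hj => hf j (by simp [hj]))

/-- the summation over blocks. -/
lemma tsum_bound :
    ∑' k : ℕ, ((k : ℝ≥0∞) + 1) ^ 2 * C P a X (2 ^ k) (2 ^ (k + 1))
      ≤ 4 * ∑' (q : ℕ+ × ℕ+), w P a X (q.1 : ℕ) (q.2 : ℕ) := by
  rw [← ENNReal.tsum_mul_left]
  set T : ℕ → Finset (ℕ × ℕ) := fun k =>
    Finset.Ico (2 ^ k) (2 ^ (k + 1)) ×ˢ Finset.Ico (2 ^ k) (2 ^ (k + 1)) with hT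
  have hCT : ∀ k, C P a X (2 ^ k) (2 ^ (k + 1)) = ∑ p ∈ T k, c P a X p.1 p.2 := fun k => rfl
  rw [ENNReal.tsum_eq_iSup_sum]
  refine iSup_le fun F => ?_
  have hstep : ∀ k ∈ F, ((k : ℝ≥0∞) + 1) ^ 2 * C P a X (2 ^ k) (2 ^ (k + 1))
      ≤ ∑ p ∈ T k, 4 * w P a X p.1 p.2 := by
    intro k _
    rw [hCT, Finset.mul_sum]
    refine Finset.sum_le_sum fun p hp => ?_
    rw [hT, Finset.mem_product] at hp
    exact keyENN P a X k p.1 p.2 hp.1 hp.2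
  calc ∑ k ∈ F, ((k : ℝ≥0∞) + 1) ^ 2 * C P a X (2 ^ k) (2 ^ (k + 1))
      ≤ ∑ k ∈ F, ∑ p ∈ T k, 4 * w P a X p.1 p.2 := Finset.sum_le_sum hstep
    _ = ∑ p ∈ F.biUnion T, 4 * w P a X p.1 p.2 := by
        rw [Finset.sum_biUnion]
        intro k _ k' _ hkk'
        refine Finset.disjoint_left.mpr fun p hp hp' => ?_
        rw [hT] at hp hp'
        rw [Finset.mem_product, Finset.mem_Ico, Finset.mem_Ico] at hp hp'
        rcases lt_or_gt_of_ne hkk' with h | h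
        · have : (2 : ℕ) ^ (k + 1) ≤ 2 ^ k' := Nat.pow_le_pow_right (by norm_num) h
          omega
        · have : (2 : ℕ) ^ (k' + 1) ≤ 2 ^ k := Nat.pow_le_pow_right (by norm_num) h
          omega
    _ ≤ ∑' (q : ℕ+ × ℕ+), 4 * w P a X (q.1 : ℕ) (q.2 : ℕ) := by
        have hpos : ∀ p ∈ F.biUnion T, 1 ≤ p.1 ∧ 1 ≤ p.2 := by
          intro p hp
          rw [Finset.mem_biUnion] at hp
          obtain ⟨k, _, hpk⟩ := hp
          rw [hT, Finset.mem_product, Finset.mem_Ico, Finset.mem_Ico] at hpk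
          have h2k : 1 ≤ 2 ^ k := Nat.one_le_two_pow
          omega
        set φ : ℕ × ℕ → ℕ+ × ℕ+ := fun p => (p.1.toPNat', p.2.toPNat') with hφ
        have hcoe : ∀ p ∈ F.biUnion T,
            ((((φ p).1 : ℕ+) : ℕ), (((φ p).2 : ℕ+) : ℕ)) = p := by
          intro p hp
          obtain ⟨h1, h2⟩ := hpos p hp
          rw [hφ]
          simp only
          rw [PNat.toPNat'_coe h1, PNat.toPNat'_coe h2]
        have hinj : ∀ p ∈ F.biUnion T, ∀ q ∈ F.biUnion T, φ p = φ q → p = q := by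
          intro p hp q hq h
          have := congrArg (fun r : ℕ+ × ℕ+ => ((r.1 : ℕ), (r.2 : ℕ))) h
          rw [← hcoe p hp, ← hcoe q hq]
          simpa using this
        rw [show ∑ p ∈ F.biUnion T, 4 * w P a X p.1 p.2
            = ∑ q ∈ (F.biUnion T).image φ, 4 * w P a X (q.1 : ℕ) (q.2 : ℕ) from ?_]
        · exact ENNReal.sum_le_tsum _
        · rw [Finset.sum_image hinj]
          refine Finset.sum_congr rfl fun p hp => ?_
          have := hcoe p hp
          have h1 : (((φ p).1 : ℕ+) : ℕ) = p.1 := by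
            have := congrArg Prod.fst this; simpa using this
          have h2 : (((φ p).2 : ℕ+) : ℕ) = p.2 := by
            have := congrArg Prod.snd this; simpa using this
          rw [h1, h2]

end MRaux

open MRaux in
/-- Under the Menshov–Rademacher type condition `L < ∞`, the block maxima
`S°_k = max_{2^k ≤ j < 2^{k+1}} |Σ_{n=2^k}^j a_n X_n|` satisfy
`Σ_k E((S°_k)²) ≤ 4 L` and `S°_k → 0` almost surely. -/
theorem block_maxima_tend_to_zero
    {Ω : Type*} [MeasurableSpace Ω] (P : Measure Ω) [IsProbabilityMeasure P]
    (a : ℕ → ℂ) (X : ℕ → Ω → ℂ)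
    (hmeas : ∀ n, 1 ≤ n → AEMeasurable (X n) P)
    (hnorm : ∀ n, 1 ≤ n → ∫ ω, ‖X n ω‖ ^ 2 ∂P = 1)
    (L : ℝ≥0∞)
    (hLdef : L = ∑' (n : ℕ+) (m : ℕ+),
      ENNReal.ofReal (‖a n‖ * ‖a m‖ * ‖∫ ω, X n ω * (starRingEnd ℂ) (X m ω) ∂P‖ *
        Real.logb 2 ((n : ℕ) + 1) * Real.logb 2 ((m : ℕ) + 1)))
    (hL : L < ⊤) :
    (∑' k : ℕ, ∫⁻ ω, ENNReal.ofReal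
        (((Finset.Ico (2 ^ k) (2 ^ (k + 1))).sup'
            (Finset.nonempty_Ico.mpr (Nat.pow_lt_pow_succ one_lt_two))
            (fun j => ‖∑ n ∈ Finset.Icc (2 ^ k) j, a n * X n ω‖)) ^ 2) ∂P) ≤ 4 * L ∧
      ∀ᵐ ω ∂P, Tendsto (fun k : ℕ =>
          (Finset.Ico (2 ^ k) (2 ^ (k + 1))).sup'
            (Finset.nonempty_Ico.mpr (Nat.pow_lt_pow_succ one_lt_two))
            (fun j => ‖∑ n ∈ Finset.Icc (2 ^ k) j, a n * X n ω‖))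
        atTop (nhds 0) := by
  set S : ℕ → Ω → ℝ := fun k ω =>
    (Finset.Ico (2 ^ k) (2 ^ (k + 1))).sup'
      (Finset.nonempty_Ico.mpr (Nat.pow_lt_pow_succ one_lt_two))
      (fun j => ‖∑ n ∈ Finset.Icc (2 ^ k) j, a n * X n ω‖) with hS
  -- rewrite L as a tsum over pairs
  have hLpair : L = ∑' (q : ℕ+ × ℕ+), w P a X (q.1 : ℕ) (q.2 : ℕ) := by
    rw [hLdef, ENNReal.tsum_prod']
    rfl
  have h2pow : ∀ k : ℕ, (2 : ℕ) ^ k + 2 ^ k = 2 ^ (k + 1) := by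
    intro k; rw [pow_succ, mul_two]
  have h2k1 : ∀ k : ℕ, (1 : ℕ) ≤ 2 ^ k := fun k => Nat.one_le_two_pow
  -- pointwise bound for S
  have hpw : ∀ k ω, (S k ω) ^ 2 ≤ ((k : ℝ) + 1) * V a X k (2 ^ k) ω := by
    intro k ω
    obtain ⟨j, hj, hEq⟩ := Finset.exists_mem_eq_sup'
      (Finset.nonempty_Ico.mpr (Nat.pow_lt_pow_succ one_lt_two))
      (fun j => ‖∑ n ∈ Finset.Icc (2 ^ k) j, a n * X n ω‖)
    rw [hS]
    simp only
    rw [hEq]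
    refine pointwise a X k (2 ^ k) j ?_ ω
    rwa [h2pow k]
  -- nonnegativity of S
  have hSnn : ∀ k ω, 0 ≤ S k ω := by
    intro k ω
    have hmem : (2 : ℕ) ^ k ∈ Finset.Ico (2 ^ k) (2 ^ (k + 1)) :=
      Finset.mem_Ico.mpr ⟨le_refl _, Nat.pow_lt_pow_succ one_lt_two⟩
    rw [hS]
    exact le_trans (norm_nonneg (∑ n ∈ Finset.Icc (2 ^ k) (2 ^ k), a n * X n ω))
      (Finset.le_sup' (fun j => ‖∑ n ∈ Finset.Icc (2 ^ k) j, a n * X n ω‖) hmem)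
  -- AE measurability of S
  have hSmeas : ∀ k, AEMeasurable (S k) P := by
    intro k
    refine aemeasurable_sup'_aux _ ?_
    intro j hj
    refine AEMeasurable.norm ?_
    refine aemeas_sum P a X hmeas _ ?_
    intro n hn
    have := (Finset.mem_Icc.mp hn).1
    exact le_trans (h2k1 k) this
  -- the per-block bound
  have hblock : ∀ k : ℕ, ∫⁻ ω, ENNReal.ofReal ((S k ω) ^ 2) ∂P
      ≤ ((k : ℝ≥0∞) + 1) ^ 2 * C P a X (2 ^ k) (2 ^ (k + 1)) := by
    intro k
    have hVbound := lintV P a X hmeas hnorm k (2 ^ k) (h2k1 k)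
    rw [h2pow k] at hVbound
    calc ∫⁻ ω, ENNReal.ofReal ((S k ω) ^ 2) ∂P
        ≤ ∫⁻ ω, ENNReal.ofReal (((k : ℝ) + 1) * V a X k (2 ^ k) ω) ∂P :=
          lintegral_mono fun ω => ENNReal.ofReal_le_ofReal (hpw k ω)
      _ = ∫⁻ ω, ENNReal.ofReal ((k : ℝ) + 1) * ENNReal.ofReal (V a X k (2 ^ k) ω) ∂P := by
          refine lintegral_congr fun ω => ?_
          rw [ENNReal.ofReal_mul (by positivity)]
      _ = ENNReal.ofReal ((k : ℝ) + 1) * ∫⁻ ω, ENNReal.ofReal (V a X k (2 ^ k) ω) ∂P :=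
          lintegral_const_mul' _ _ ENNReal.ofReal_ne_top
      _ ≤ ENNReal.ofReal ((k : ℝ) + 1) *
            (((k : ℝ≥0∞) + 1) * C P a X (2 ^ k) (2 ^ (k + 1))) :=
          mul_le_mul_right hVbound _
      _ = ((k : ℝ≥0∞) + 1) ^ 2 * C P a X (2 ^ k) (2 ^ (k + 1)) := by
          rw [ofReal_kcast]; ring
  -- goal 1
  have hgoal1 : (∑' k : ℕ, ∫⁻ ω, ENNReal.ofReal ((S k ω) ^ 2) ∂P) ≤ 4 * L := by
    calc ∑' k : ℕ, ∫⁻ ω, ENNReal.ofReal ((S k ω) ^ 2) ∂P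
        ≤ ∑' k : ℕ, ((k : ℝ≥0∞) + 1) ^ 2 * C P a X (2 ^ k) (2 ^ (k + 1)) :=
          ENNReal.tsum_le_tsum hblock
      _ ≤ 4 * ∑' (q : ℕ+ × ℕ+), w P a X (q.1 : ℕ) (q.2 : ℕ) := tsum_bound P a X
      _ = 4 * L := by rw [hLpair]
  refine ⟨hgoal1, ?_⟩
  -- part 2 : a.s. convergence
  have humeas : ∀ k : ℕ, AEMeasurable (fun ω => ENNReal.ofReal ((S k ω) ^ 2)) P :=
    fun k => ENNReal.measurable_ofReal.comp_aemeasurable ((hSmeas k).pow_const 2)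
  have hlt : ∫⁻ ω, ∑' k : ℕ, ENNReal.ofReal ((S k ω) ^ 2) ∂P < ⊤ := by
    rw [lintegral_tsum humeas]
    exact lt_of_le_of_lt hgoal1 (by
      have : (4 : ℝ≥0∞) * L < ⊤ := ENNReal.mul_lt_top (by norm_num) hL
      exact this)
  have hae := ae_lt_top' (AEMeasurable.ennreal_tsum humeas) hlt.ne
  filter_upwards [hae] with ω hω
  have h0 : Tendsto (fun k : ℕ => ENNReal.ofReal ((S k ω) ^ 2)) atTop (nhds 0) :=
    ENNReal.tendsto_atTop_zero_of_tsum_ne_top hω.ne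
  have h1 : Tendsto (fun k : ℕ => (S k ω) ^ 2) atTop (nhds 0) := by
    have h2 := (ENNReal.tendsto_toReal (by norm_num : (0 : ℝ≥0∞) ≠ ⊤)).comp h0
    simp only [ENNReal.toReal_zero] at h2
    refine h2.congr fun k => ?_
    simp only [Function.comp_apply]
    rw [ENNReal.toReal_ofReal (by positivity)]
  have h2 : Tendsto (fun k : ℕ => S k ω) atTop (nhds 0) := by
    have h3 := (Real.continuous_sqrt.tendsto 0).comp h1
    simp only [Real.sqrt_zero] at h3
    refine h3.congr fun k => ?_
    simp only [Function.comp_apply]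
    exact Real.sqrt_sq (hSnn k ω)
  exact h2
end
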